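/- arXiv:1806.07010 — 6 statements merged into one kernel-verified Lean document; each statement's English description precedes it below -/
import Mathlib

section
/- Let S be an F-subspace of F[G] closed under the Hadamard product, where F has characteristic zero. Then for every α ∈ S and every c ∈ F with c ≠ 0, the simple quantity of the coefficient complex K(α, c) = {g | α_g = c} lies in S. -/
/-- The Hadamard (coefficientwise) product on the group algebra. -/
noncomputable def hadamard {F G : Type*} [Semiring F]
    (α β : MonoidAlgebra F G) : MonoidAlgebra F G :=
  MonoidAlgebra.ofCoeff (Finsupp.zipWith (· * ·) (mul_zero 0) α.coeff β.coeff)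

/-- The simple quantity `C̄ = ∑_{g ∈ C} g` of a finite subset of `G`. -/
noncomputable def simpleQuantity (F : Type*) {G : Type*} [Semiring F] (C : Finset G) :
    MonoidAlgebra F G :=
  ∑ g ∈ C, MonoidAlgebra.single g 1

/-- A partition of `G` into finite (nonempty) classes, i.e. a partition of finite support. -/
structure FinPartition (G : Type*) where
  classes : Set (Finset G)
  nonempty : ∀ C ∈ classes, C.Nonempty
  existsUnique_mem : ∀ g : G, ∃! C, C ∈ classes ∧ g ∈ C

/-- The Schur module associated to a partition of finite support: the `F`-span of the
simple quantities of the classes. -/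
noncomputable def schurModule (F : Type*) {G : Type*} [Field F] (P : FinPartition G) :
    Submodule F (MonoidAlgebra F G) :=
  Submodule.span F (simpleQuantity F '' P.classes)

/-- Hadamard powers: `hadPow α n` has coefficients `(α g)^(n+1)`. -/
noncomputable def hadPow {F G : Type*} [Semiring F] (α : MonoidAlgebra F G) : ℕ → MonoidAlgebra F G
  | 0 => α
  | n + 1 => hadamard α (hadPow α n)

lemma hadamard_apply {F G : Type*} [Semiring F] (α β : MonoidAlgebra F G) (g : G) :
    (hadamard α β).coeff g = α.coeff g * β.coeff g := rfl

lemma hadPow_apply {F G : Type*} [CommSemiring F] (α : MonoidAlgebra F G) (n : ℕ) (g : G) :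
    (hadPow α n).coeff g = (α.coeff g) ^ (n + 1) := by
  induction n with
  | zero => simp [hadPow]
  | succ n ih => rw [hadPow, hadamard_apply, ih]; ring

theorem stmt6 {F G : Type*} [Field F] [CharZero F] [Group G]
    (S : Submodule F (MonoidAlgebra F G))
    (hS : ∀ α ∈ S, ∀ β ∈ S, hadamard α β ∈ S)
    (α : MonoidAlgebra F G) (hα : α ∈ S) (c : F) (hc : c ≠ 0) :
    ∃ K : Finset G, (K : Set G) = {g : G | α.coeff g = c} ∧ simpleQuantity F K ∈ S := by
  classical
  -- the level set
  refine ⟨α.coeff.support.filter (fun g => α.coeff g = c), ?_, ?_⟩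
  · ext g
    simp only [Finset.coe_filter, Finsupp.mem_support_iff, Set.mem_setOf_eq]
    constructor
    · rintro ⟨_, h⟩; exact h
    · intro h; exact ⟨by rw [h]; exact hc, h⟩
  -- Hadamard powers lie in S
  have hpowS : ∀ n, hadPow α n ∈ S := by
    intro n
    induction n with
    | zero => exact hα
    | succ n ih => exact hS α hα _ ih
  -- set of values
  set V : Finset F := insert 0 (α.coeff.support.image α.coeff) with hV
  set r : F → F := fun x => if x = c then 1 else 0 with hr
  set p : Polynomial F := Lagrange.interpolate V id r with hp
  have hinj : Set.InjOn (id : F → F) V := Function.injective_id.injOn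
  have heval : ∀ x ∈ V, p.eval x = r x := by
    intro x hx
    simpa [hp] using Lagrange.eval_interpolate_at_node r hinj hx
  have hmemV : ∀ g : G, α.coeff g ∈ V := by
    intro g
    by_cases h : α.coeff g = 0
    · rw [h]; exact Finset.mem_insert_self _ _
    · exact Finset.mem_insert_of_mem (Finset.mem_image_of_mem α.coeff (Finsupp.mem_support_iff.mpr h))
  have hp0 : p.coeff 0 = 0 := by
    rw [Polynomial.coeff_zero_eq_eval_zero, heval 0 (Finset.mem_insert_self _ _), hr]
    simp [Ne.symm hc]
  -- the combination of Hadamard powers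
  set β : MonoidAlgebra F G :=
    ∑ k ∈ Finset.range p.natDegree, p.coeff (k + 1) • hadPow α k with hβ
  have hβS : β ∈ S := Submodule.sum_mem S fun k _ =>
    Submodule.smul_mem S _ (hpowS k)
  have hβeval : ∀ g : G, β.coeff g = p.eval (α.coeff g) := by
    intro g
    rw [hβ, MonoidAlgebra.coeff_sum, Finsupp.finset_sum_apply]
    have step : ∀ k ∈ Finset.range p.natDegree,
        (p.coeff (k + 1) • hadPow α k).coeff g = p.coeff (k + 1) * (α.coeff g) ^ (k + 1) := by
      intro k _
      rw [MonoidAlgebra.coeff_smul_apply, hadPow_apply, smul_eq_mul]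
    rw [Finset.sum_congr rfl step,
      Polynomial.eval_eq_sum_range, Finset.sum_range_succ', hp0]
    simp
  have : β = simpleQuantity F (α.coeff.support.filter (fun g => α.coeff g = c)) := by
    ext g
    rw [hβeval g, heval _ (hmemV g), hr]
    rw [simpleQuantity, MonoidAlgebra.coeff_sum, Finset.sum_apply']
    simp only [MonoidAlgebra.coeff_single, Finsupp.single_apply, Finset.sum_ite_eq', Finset.mem_filter,
      Finsupp.mem_support_iff]
    by_cases h : α.coeff g = c
    · simp [h, hc]
    · simp [h]
  rwa [← this]
end

section
/- Let S be a Schur ring over a group G and let α ∈ S. Then stab(α) = {g ∈ G | α·g = α} is an S-subgroup of G, i.e., a subgroup that is a union of classes of the partition associated to S. -/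
/-- A Schur ring over a group `G` with coefficients in `F`, given by its partition
of finite support: `{1}` is a class, classes are closed under inversion, and the product
of two simple quantities is a finite `F`-linear combination of simple quantities. -/
structure SchurRing (F G : Type*) [Field F] [Group G] extends FinPartition G where
  one_mem : ({1} : Finset G) ∈ classes
  inv_mem : ∀ C ∈ classes, ∃ D ∈ classes, ∀ g : G, g ∈ D ↔ g⁻¹ ∈ C
  mul_mem : ∀ C ∈ classes, ∀ D ∈ classes,
    simpleQuantity F C * simpleQuantity F D ∈
      Submodule.span F (simpleQuantity F '' classes)

/-- The underlying Schur ring, as a submodule of the group algebra. -/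
noncomputable def SchurRing.carrier {F G : Type*} [Field F] [Group G] (S : SchurRing F G) :
    Submodule F (MonoidAlgebra F G) :=
  schurModule F S.toFinPartition

/-- A subset of `G` is an `S`-set if it is a union of classes of the partition. -/
def IsSSet {F G : Type*} [Field F] [Group G] (S : SchurRing F G) (X : Set G) : Prop :=
  ∃ E ⊆ S.classes, X = ⋃ C ∈ E, (C : Set G)

/-- The group ring `F[H]` of a subgroup, viewed inside `F[G]`. -/
noncomputable def groupRingOf (F : Type*) {G : Type*} [Field F] [Group G] (H : Subgroup G) :
    Submodule F (MonoidAlgebra F G) :=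
  Submodule.span F ((fun g => (MonoidAlgebra.single g 1 : MonoidAlgebra F G)) '' (H : Set G))

section Lemmas

variable {F G : Type*}

open scoped Classical in
lemma simpleQuantity_apply [Semiring F] (C : Finset G) (x : G) :
    (simpleQuantity F C).coeff x = if x ∈ C then 1 else 0 := by
  rw [simpleQuantity, MonoidAlgebra.coeff_sum, Finsupp.finset_sum_apply]
  simp [MonoidAlgebra.coeff_single, Finsupp.single_apply]

lemma FinPartition.class_eq (P : FinPartition G) {C D : Finset G}
    (hC : C ∈ P.classes) (hD : D ∈ P.classes) {g : G} (hgC : g ∈ C) (hgD : g ∈ D) : C = D := by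
  obtain ⟨E, -, hu⟩ := P.existsUnique_mem g
  rw [hu C ⟨hC, hgC⟩, hu D ⟨hD, hgD⟩]

lemma constant_on_classes [Field F] (P : FinPartition G) {α : MonoidAlgebra F G}
    (hα : α ∈ schurModule F P) {C : Finset G} (hC : C ∈ P.classes)
    {g g' : G} (hg : g ∈ C) (hg' : g' ∈ C) : α.coeff g = α.coeff g' := by
  induction hα using Submodule.span_induction with
  | mem x hx =>
    obtain ⟨D, hD, rfl⟩ := hx
    classical
    rw [simpleQuantity_apply, simpleQuantity_apply]
    by_cases h : g ∈ D
    · rw [if_pos h, if_pos (P.class_eq hC hD hg h ▸ hg')]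
    · rw [if_neg h, if_neg (fun h' => h (P.class_eq hC hD hg' h' ▸ hg))]
  | zero => rfl
  | add x y hx hy ihx ihy =>
    show (x + y).coeff g = (x + y).coeff g'
    rw [MonoidAlgebra.coeff_add, Finsupp.add_apply, Finsupp.add_apply, ihx, ihy]
  | smul a x hx ihx =>
    show (a • x).coeff g = (a • x).coeff g'
    rw [MonoidAlgebra.coeff_smul, Finsupp.smul_apply, Finsupp.smul_apply, ihx]

lemma mul_mem_schurModule [Field F] [Group G] (S : SchurRing F G) {α β : MonoidAlgebra F G}
    (hα : α ∈ S.carrier) (hβ : β ∈ S.carrier) : α * β ∈ S.carrier := by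
  induction hα using Submodule.span_induction with
  | mem x hx =>
    induction hβ using Submodule.span_induction with
    | mem y hy =>
      obtain ⟨C, hC, rfl⟩ := hx
      obtain ⟨D, hD, rfl⟩ := hy
      exact S.mul_mem C hC D hD
    | zero => simp [SchurRing.carrier, schurModule]
    | add y z hy hz ihy ihz => rw [mul_add]; exact Submodule.add_mem _ ihy ihz
    | smul a y hy ihy => rw [mul_smul_comm]; exact Submodule.smul_mem _ _ ihy
  | zero => simp [SchurRing.carrier, schurModule]
  | add x y hx hy ihx ihy => rw [add_mul]; exact Submodule.add_mem _ ihx ihy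
  | smul a x hx ihx => rw [smul_mul_assoc]; exact Submodule.smul_mem _ _ ihx

/-- A finite set closed under the partition classes has its simple quantity in the module. -/
lemma sq_mem_of_closed [Field F] (P : FinPartition G) :
    ∀ (n : ℕ) (T : Finset G), T.card ≤ n →
    (∀ g ∈ T, ∀ C ∈ P.classes, g ∈ C → (C : Set G) ⊆ T) →
    simpleQuantity F T ∈ schurModule F P := by
  classical
  intro n
  induction n with
  | zero =>
    intro T hcard _
    rw [Nat.le_zero, Finset.card_eq_zero] at hcard
    subst hcard
    simp [simpleQuantity]
  | succ n ih =>
    intro T hcard hclosed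
    rcases T.eq_empty_or_nonempty with rfl | ⟨g, hg⟩
    · simp [simpleQuantity]
    obtain ⟨C, ⟨hC, hgC⟩, -⟩ := P.existsUnique_mem g
    have hCT : (C : Set G) ⊆ T := hclosed g hg C hC hgC
    have hCT' : C ⊆ T := fun x hx => hCT hx
    have hsplit : simpleQuantity F T = simpleQuantity F (T \ C) + simpleQuantity F C := by
      rw [simpleQuantity, simpleQuantity, simpleQuantity, Finset.sum_sdiff hCT']
    rw [hsplit]
    refine Submodule.add_mem _ ?_ (Submodule.subset_span ⟨C, hC, rfl⟩)
    refine ih (T \ C) ?_ ?_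
    · have h1 : (T \ C).card < T.card := by
        apply Finset.card_lt_card
        constructor
        · exact Finset.sdiff_subset
        · intro hsub
          have := hsub (hCT' hgC)
          simp [hgC] at this
      omega
    · intro g' hg' D hD hg'D x hx
      have hg'T : g' ∈ T := (Finset.mem_sdiff.mp hg').1
      have hg'C : g' ∉ C := (Finset.mem_sdiff.mp hg').2
      have hDT : (D : Set G) ⊆ T := hclosed g' hg'T D hD hg'D
      refine Finset.mem_sdiff.mpr ⟨hDT hx, fun hxC => ?_⟩
      exact hg'C (P.class_eq hD hC hx hxC ▸ hg'D)

end Lemmas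

section Key

variable {F G : Type*}

open scoped Classical in
lemma sq_mul_apply [Semiring F] [Group G] (A B : Finset G) (h : G) :
    (simpleQuantity F A * simpleQuantity F B).coeff h
      = ∑ a ∈ A, ∑ b ∈ B, if a * b = h then (1 : F) else 0 := by
  rw [simpleQuantity, simpleQuantity, Finset.sum_mul_sum, MonoidAlgebra.coeff_sum,
    Finsupp.finset_sum_apply]
  refine Finset.sum_congr rfl fun a _ => ?_
  rw [MonoidAlgebra.coeff_sum, Finsupp.finset_sum_apply]
  refine Finset.sum_congr rfl fun b _ => ?_
  rw [MonoidAlgebra.coeff_mul_single_apply, MonoidAlgebra.coeff_single, Finsupp.single_apply,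
    mul_one]
  exact if_congr (by rw [eq_mul_inv_iff_mul_eq]) rfl rfl

lemma key_lemma [Field F] [CharZero F] [Group G] (S : SchurRing F G)
    (α : MonoidAlgebra F G) (hα : α ∈ S.carrier)
    {g : G} (hg : α * MonoidAlgebra.of F G g = α)
    {C : Finset G} (hC : C ∈ S.classes) (hgC : g ∈ C)
    {c : G} (hc : c ∈ C) : α * MonoidAlgebra.of F G c = α := by
  classical
  have hshift : ∀ x : G, α.coeff (x * g) = α.coeff x := by
    intro x
    have h1 : (α * MonoidAlgebra.of F G g).coeff (x * g) = α.coeff (x * g) := by rw [hg]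
    rw [MonoidAlgebra.of_apply, MonoidAlgebra.coeff_mul_single_apply, mul_inv_cancel_right,
      mul_one] at h1
    exact h1.symm
  have key : ∀ t : F, t ≠ 0 → ∀ x : G, α.coeff x = t ↔ α.coeff (x * c⁻¹) = t := by
    intro t ht
    set T : Finset G := α.coeff.support.filter (fun x => α.coeff x = t) with hT
    have memT : ∀ x : G, x ∈ T ↔ α.coeff x = t := by
      intro x
      rw [hT, Finset.mem_filter, Finsupp.mem_support_iff]
      constructor
      · exact fun h => h.2
      · exact fun h => ⟨h ▸ ht, h⟩
    have Tg : ∀ x : G, x * g ∈ T ↔ x ∈ T := by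
      intro x; rw [memT, memT, hshift]
    have Tclosed : ∀ x ∈ T, ∀ D ∈ S.classes, x ∈ D → (D : Set G) ⊆ T := by
      intro x hx D hD hxD y hy
      have hy' : y ∈ D := hy
      have := constant_on_classes S.toFinPartition hα hD hy' hxD
      exact (memT y).mpr (this.trans ((memT x).mp hx))
    set Ti : Finset G := T.image (·⁻¹) with hTi
    have memTi : ∀ x : G, x ∈ Ti ↔ x⁻¹ ∈ T := by
      intro x
      rw [hTi, Finset.mem_image]
      constructor
      · rintro ⟨y, hy, rfl⟩; simpa using hy
      · exact fun h => ⟨x⁻¹, h, inv_inv x⟩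
    have Ticlosed : ∀ x ∈ Ti, ∀ D ∈ S.classes, x ∈ D → (D : Set G) ⊆ Ti := by
      intro x hx D hD hxD y hy
      have hy' : y ∈ D := hy
      obtain ⟨E, ⟨hE, hEC⟩, -⟩ := S.existsUnique_mem x⁻¹
      obtain ⟨D', hD', hD'E⟩ := S.inv_mem E hE
      -- x ∈ D' since x⁻¹ ∈ E
      have hxD' : x ∈ D' := (hD'E x).mpr hEC
      have : D = D' := S.toFinPartition.class_eq hD hD' hxD hxD'
      subst this
      -- y ∈ D so y⁻¹ ∈ E ⊆ T
      have hyi : y⁻¹ ∈ E := (hD'E y).mp hy'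
      have hET : (E : Set G) ⊆ T := Tclosed x⁻¹ ((memTi x).mp hx) E hE hEC
      exact (memTi y).mpr (hET hyi)
    have hsqT : simpleQuantity F T ∈ S.carrier :=
      sq_mem_of_closed S.toFinPartition T.card T le_rfl Tclosed
    have hsqTi : simpleQuantity F Ti ∈ S.carrier :=
      sq_mem_of_closed S.toFinPartition Ti.card Ti le_rfl Ticlosed
    have hβ : simpleQuantity F Ti * simpleQuantity F T ∈ S.carrier :=
      mul_mem_schurModule S hsqTi hsqT
    -- counting function
    set N : G → ℕ := fun h => ∑ a ∈ Ti, ∑ b ∈ T, if a * b = h then 1 else 0 with hN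
    have βval : ∀ h : G, (simpleQuantity F Ti * simpleQuantity F T).coeff h = (N h : F) := by
      intro h
      rw [sq_mul_apply, hN]
      push_cast
      rfl
    have hNgc : N g = N c := by
      have h1 := constant_on_classes S.toFinPartition hβ hC hgC hc
      rw [βval, βval] at h1
      exact_mod_cast h1
    have Ncard : ∀ h : G, N h = ((Ti ×ˢ T).filter (fun p => p.1 * p.2 = h)).card := by
      intro h
      rw [hN, Finset.card_filter, Finset.sum_product]
    have hNg : N g = T.card := by
      rw [Ncard]
      symm
      apply Finset.card_nbij (fun x => (x⁻¹, x * g))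
      · intro x hx
        simp only [Finset.mem_coe, Finset.mem_filter, Finset.mem_product]
        exact ⟨⟨(memTi x⁻¹).mpr (by simpa using hx), (Tg x).mpr hx⟩, by group⟩
      · intro x hx y hy hxy
        have := congrArg Prod.fst hxy
        simpa using this
      · rintro ⟨a, b⟩ hab
        simp only [Finset.coe_filter, Set.mem_setOf_eq, Finset.mem_product] at hab
        obtain ⟨⟨ha, hb⟩, heq⟩ := hab
        refine ⟨b * g⁻¹, ?_, ?_⟩
        · simpa using (Tg (b * g⁻¹)).mp (by simpa using hb)
        · have ha' : a = g * b⁻¹ := by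
            rw [← heq]; group
          simp only [Prod.mk.injEq]
          constructor
          · rw [ha']; group
          · group
    -- From N c = T.card, deduce T * c⁻¹ = T
    have hNc : T.card = ((Ti ×ˢ T).filter (fun p => p.1 * p.2 = c)).card := by
      rw [← Ncard, ← hNgc, hNg]
    set Sc : Finset (G × G) := (Ti ×ˢ T).filter (fun p => p.1 * p.2 = c) with hSc
    have memSc : ∀ p : G × G, p ∈ Sc ↔ p.1 ∈ Ti ∧ p.2 ∈ T ∧ p.1 * p.2 = c := by
      intro p
      rw [hSc, Finset.mem_filter, Finset.mem_product]
      tauto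
    have hsub : Finset.image Prod.snd Sc ⊆ T := by
      intro b hb
      obtain ⟨p, hp, rfl⟩ := Finset.mem_image.mp hb
      exact ((memSc p).mp hp).2.1
    have hinj : Set.InjOn Prod.snd (Sc : Set (G × G)) := by
      intro p hp q hq hpq
      have hp' := (memSc p).mp hp
      have hq' := (memSc q).mp hq
      have h1 : p.1 = c * p.2⁻¹ := by rw [← hp'.2.2]; group
      have h2 : q.1 = c * q.2⁻¹ := by rw [← hq'.2.2]; group
      have : p.1 = q.1 := by rw [h1, h2, hpq]
      exact Prod.ext this hpq
    have himg : Finset.image Prod.snd Sc = T := by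
      refine Finset.eq_of_subset_of_card_le hsub ?_
      rw [Finset.card_image_of_injOn hinj, ← hNc]
    have fwd : ∀ b ∈ T, b * c⁻¹ ∈ T := by
      intro b hb
      have hb' : b ∈ Finset.image Prod.snd Sc := himg ▸ hb
      obtain ⟨p, hp, rfl⟩ := Finset.mem_image.mp hb'
      have hp' := (memSc p).mp hp
      have h1 : p.1⁻¹ = p.2 * c⁻¹ := by rw [← hp'.2.2]; group
      have h2 : p.1⁻¹ ∈ T := (memTi p.1).mp hp'.1
      rwa [h1] at h2
    have Timg : Finset.image (· * c⁻¹) T = T := by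
      refine Finset.eq_of_subset_of_card_le ?_ ?_
      · intro b hb
        obtain ⟨x, hx, rfl⟩ := Finset.mem_image.mp hb
        exact fwd x hx
      · rw [Finset.card_image_of_injOn (fun x _ y _ h => by
          simpa using mul_right_cancel (h : x * c⁻¹ = y * c⁻¹))]
    have bwd : ∀ x : G, x * c⁻¹ ∈ T → x ∈ T := by
      intro x hx
      rw [← Timg] at hx
      obtain ⟨b, hb, heq⟩ := Finset.mem_image.mp hx
      have : b = x := mul_right_cancel (heq : b * c⁻¹ = x * c⁻¹)
      rwa [← this]
    intro x
    rw [← memT, ← memT]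
    exact ⟨fun h => fwd x h, fun h => bwd x h⟩
  refine MonoidAlgebra.ext (Finsupp.ext fun x => ?_)
  rw [MonoidAlgebra.of_apply, MonoidAlgebra.coeff_mul_single_apply, mul_one]
  by_cases h0 : α.coeff x = 0
  · by_contra hne
    rw [h0] at hne
    have h2 := (key (α.coeff (x * c⁻¹)) hne x).mpr rfl
    rw [h0] at h2
    exact hne h2.symm
  · exact (key (α.coeff x) h0 x).mp rfl

end Key

theorem stmt8 {F G : Type*} [Field F] [CharZero F] [Group G]
    (S : SchurRing F G) (α : MonoidAlgebra F G) (hα : α ∈ S.carrier) :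
    ∃ H : Subgroup G,
      (H : Set G) = {g : G | α * MonoidAlgebra.of F G g = α} ∧ IsSSet S (H : Set G) := by
  classical
  refine ⟨{ carrier := {g : G | α * MonoidAlgebra.of F G g = α}
            one_mem' := by show α * MonoidAlgebra.of F G 1 = α; rw [map_one, mul_one]
            mul_mem' := by
              intro a b ha hb
              show α * MonoidAlgebra.of F G (a * b) = α
              rw [map_mul, ← mul_assoc, ha, hb]
            inv_mem' := by
              intro a ha
              show α * MonoidAlgebra.of F G a⁻¹ = α
              conv_lhs => rw [← ha]
              rw [mul_assoc, ← map_mul, mul_inv_cancel, map_one, mul_one] }, rfl, ?_⟩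
  refine ⟨{C | C ∈ S.classes ∧ (C : Set G) ⊆ {g : G | α * MonoidAlgebra.of F G g = α}},
    fun C hC => hC.1, ?_⟩
  ext x
  simp only [Set.mem_iUnion, Set.mem_setOf_eq]
  constructor
  · intro hx
    obtain ⟨C, ⟨hC, hxC⟩, -⟩ := S.existsUnique_mem x
    refine ⟨C, ⟨hC, fun c hc => key_lemma S α hα hx hC hxC hc⟩, hxC⟩
  · rintro ⟨C, ⟨-, hsub⟩, hxC⟩
    exact hsub hxC
end

section
/- Let G be a torsion-free abelian group, S a Schur ring over F[G], α ∈ S, and m ∈ ℤ. Then the freshman exponent α^{(m)} = Σ_g α_g g^m lies in S. -/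
/-- The freshman exponent `α^{(m)} = ∑_g α_g g^m`. -/
noncomputable def fresh {F G : Type*} [Field F] [Group G] (m : ℤ)
    (α : MonoidAlgebra F G) : MonoidAlgebra F G :=
  ∑ g ∈ α.coeff.support, MonoidAlgebra.single (g ^ m) (α.coeff g)

/-! ### Auxiliary lemmas -/

section Aux

open Finsupp

/-- Coefficient of a finite sum of singles. -/
lemma sum_single_coeff {R G : Type*} [Semiring R] [DecidableEq G]
    (s : Finset G) (h : G → R) (d : G) :
    (∑ g ∈ s, MonoidAlgebra.single g (h g)).coeff d = if d ∈ s then h d else 0 := by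
  classical
  rw [MonoidAlgebra.coeff_sum, Finset.sum_apply']
  simp only [MonoidAlgebra.coeff_single]
  rw [Finset.sum_congr rfl fun g _ => Finsupp.single_apply (a := g) (b := h g) (a' := d)]
  exact Finset.sum_ite_eq' s d h

lemma simpleQuantity_coeff {R G : Type*} [Semiring R] [DecidableEq G]
    (C : Finset G) (d : G) :
    (simpleQuantity R C).coeff d = if d ∈ C then (1 : R) else 0 := by
  rw [simpleQuantity, sum_single_coeff]

/-- The coefficientwise `ℕ → R` cast, as a ring homomorphism of monoid algebras. -/
noncomputable def natCastMA (R : Type*) {G : Type*} [CommSemiring R] [CommMonoid G] :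
    MonoidAlgebra ℕ G →+* MonoidAlgebra R G :=
  MonoidAlgebra.liftNCRingHom
    (MonoidAlgebra.singleOneRingHom.comp (Nat.castRingHom R))
    (MonoidAlgebra.of R G) (fun _ _ => Commute.all _ _)

lemma natCastMA_single {R G : Type*} [CommSemiring R] [CommMonoid G] (g : G) (n : ℕ) :
    natCastMA R (MonoidAlgebra.single g n) = MonoidAlgebra.single g (n : R) := by
  have h2 : natCastMA R (MonoidAlgebra.single g 1) = MonoidAlgebra.single g (1 : R) := by
    have h := MonoidAlgebra.liftNC_single
      (((MonoidAlgebra.singleOneRingHom.comp (Nat.castRingHom R) :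
          ℕ →+* MonoidAlgebra R G)) : ℕ →+ MonoidAlgebra R G)
      (MonoidAlgebra.of R G) g 1
    refine Eq.trans (by rfl) (h.trans ?_)
    rw [AddMonoidHom.coe_coe, map_one, one_mul, MonoidAlgebra.of_apply]
  have h1 : (MonoidAlgebra.single g n : MonoidAlgebra ℕ G) = n • MonoidAlgebra.single g 1 := by
    rw [MonoidAlgebra.smul_single, smul_eq_mul, mul_one]
  rw [h1, map_nsmul, h2, MonoidAlgebra.smul_single, nsmul_eq_mul, mul_one]

lemma natCastMA_coeff {R G : Type*} [CommSemiring R] [CommMonoid G]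
    (α : MonoidAlgebra ℕ G) (d : G) :
    (natCastMA R α).coeff d = ((α.coeff d : ℕ) : R) := by
  classical
  conv_lhs => rw [← MonoidAlgebra.sum_coeff_single α, Finsupp.sum]
  rw [map_sum]
  rw [Finset.sum_congr rfl fun g _ => natCastMA_single g (α.coeff g)]
  rw [sum_single_coeff]
  by_cases hd : d ∈ α.coeff.support
  · rw [if_pos hd]
  · rw [if_neg hd, Finsupp.notMem_support_iff.mp hd, Nat.cast_zero]

end Aux

section Schur

variable {F G : Type*} [Field F] [CommGroup G]

lemma SchurRing.class_eq (S : SchurRing F G) {D D' : Finset G}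
    (hD : D ∈ S.classes) (hD' : D' ∈ S.classes) {g : G} (hg : g ∈ D) (hg' : g ∈ D') :
    D = D' :=
  (S.existsUnique_mem g).unique ⟨hD, hg⟩ ⟨hD', hg'⟩

lemma SchurRing.mem_class_iff (S : SchurRing F G) {D D' : Finset G}
    (hD : D ∈ S.classes) (hD' : D' ∈ S.classes) {d₁ d₂ : G}
    (hd₁ : d₁ ∈ D') (hd₂ : d₂ ∈ D') : d₁ ∈ D ↔ d₂ ∈ D := by
  constructor
  · intro h; rw [S.class_eq hD hD' h hd₁]; exact hd₂
  · intro h; rw [S.class_eq hD hD' h hd₂]; exact hd₁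

/-- `α` is constant on every class of the partition. -/
def SchurRing.IsConst (S : SchurRing F G) (α : MonoidAlgebra F G) : Prop :=
  ∀ D ∈ S.classes, ∀ d₁ ∈ D, ∀ d₂ ∈ D, α.coeff d₁ = α.coeff d₂

lemma SchurRing.isConst_simpleQuantity (S : SchurRing F G) {C : Finset G}
    (hC : C ∈ S.classes) : S.IsConst (simpleQuantity F C) := by
  classical
  intro D hD d₁ hd₁ d₂ hd₂
  rw [simpleQuantity_coeff, simpleQuantity_coeff]
  exact if_congr (S.mem_class_iff hC hD hd₁ hd₂) rfl rfl

/-- The submodule of all elements constant on classes. -/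
noncomputable def SchurRing.constSubmodule (S : SchurRing F G) :
    Submodule F (MonoidAlgebra F G) where
  carrier := {α | S.IsConst α}
  add_mem' := by
    intro a b ha hb D hD d₁ hd₁ d₂ hd₂
    rw [MonoidAlgebra.coeff_add, Finsupp.add_apply, Finsupp.add_apply, ha D hD d₁ hd₁ d₂ hd₂, hb D hD d₁ hd₁ d₂ hd₂]
  zero_mem' := by intro D hD d₁ hd₁ d₂ hd₂; rfl
  smul_mem' := by
    intro c a ha D hD d₁ hd₁ d₂ hd₂
    rw [MonoidAlgebra.coeff_smul, Finsupp.smul_apply, Finsupp.smul_apply, ha D hD d₁ hd₁ d₂ hd₂]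

lemma SchurRing.isConst_of_mem (S : SchurRing F G) {α : MonoidAlgebra F G}
    (hα : α ∈ S.carrier) : S.IsConst α := by
  have hle : S.carrier ≤ S.constSubmodule := by
    refine Submodule.span_le.mpr ?_
    rintro _ ⟨C, hC, rfl⟩
    exact S.isConst_simpleQuantity hC
  exact hle hα

lemma SchurRing.mem_of_isConst (S : SchurRing F G) {α : MonoidAlgebra F G}
    (h : S.IsConst α) : α ∈ S.carrier := by
  classical
  suffices H : ∀ n : ℕ, ∀ α : MonoidAlgebra F G, α.coeff.support.card ≤ n →
      S.IsConst α → α ∈ S.carrier from H _ α le_rfl h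
  intro n
  induction n with
  | zero =>
    intro α hcard _
    have : α = 0 := by
      rw [← MonoidAlgebra.coeff_eq_zero, ← Finsupp.support_eq_empty, ← Finset.card_eq_zero]
      omega
    rw [this]; exact Submodule.zero_mem _
  | succ n ih =>
    intro α hcard hc
    by_cases h0 : α = 0
    · rw [h0]; exact Submodule.zero_mem _
    obtain ⟨g, hg⟩ := Finsupp.support_nonempty_iff.mpr (show α.coeff ≠ 0 by rwa [Ne, MonoidAlgebra.coeff_eq_zero])
    have hgne : α.coeff g ≠ 0 := Finsupp.mem_support_iff.mp hg
    obtain ⟨D, ⟨hD, hgD⟩, _⟩ := S.existsUnique_mem g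
    have hDsub : D ⊆ α.coeff.support := by
      intro d hd
      exact Finsupp.mem_support_iff.mpr (by rw [hc D hD d hd g hgD]; exact hgne)
    set α' : MonoidAlgebra F G := α - α.coeff g • simpleQuantity F D with hα'
    have hval : ∀ d, α'.coeff d = α.coeff d - α.coeff g * (if d ∈ D then 1 else 0) := by
      intro d
      rw [hα', MonoidAlgebra.coeff_sub, Finsupp.sub_apply, MonoidAlgebra.coeff_smul, Finsupp.smul_apply, simpleQuantity_coeff, smul_eq_mul]
    have hsupp : α'.coeff.support ⊆ α.coeff.support \ D := by
      intro d hd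
      rw [Finsupp.mem_support_iff] at hd
      rw [Finset.mem_sdiff]
      by_cases hdD : d ∈ D
      · exact absurd (by rw [hval d, if_pos hdD, mul_one, hc D hD d hdD g hgD, sub_self]) hd
      · refine ⟨Finsupp.mem_support_iff.mpr ?_, hdD⟩
        intro hd0
        exact hd (by rw [hval d, if_neg hdD, mul_zero, sub_zero, hd0])
    have hcard' : α'.coeff.support.card ≤ n := by
      have h1 : (α.coeff.support \ D).card = α.coeff.support.card - D.card := Finset.card_sdiff_of_subset hDsub
      have h2 : 1 ≤ D.card := Finset.card_pos.mpr ⟨g, hgD⟩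
      have h3 := Finset.card_le_card hsupp
      omega
    have hc' : S.IsConst α' := by
      intro D' hD' d₁ hd₁ d₂ hd₂
      rw [hval d₁, hval d₂, hc D' hD' d₁ hd₁ d₂ hd₂,
        if_congr (S.mem_class_iff hD hD' hd₁ hd₂) rfl rfl]
    have hmem' : α' ∈ S.carrier := ih α' hcard' hc'
    have hqmem : simpleQuantity F D ∈ S.carrier :=
      Submodule.subset_span ⟨D, hD, rfl⟩
    have : α' + α.coeff g • simpleQuantity F D ∈ S.carrier :=
      Submodule.add_mem _ hmem' (Submodule.smul_mem _ _ hqmem)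
    rwa [hα', sub_add_cancel] at this

lemma SchurRing.one_mem_carrier (S : SchurRing F G) : (1 : MonoidAlgebra F G) ∈ S.carrier := by
  have h1 : simpleQuantity F ({1} : Finset G) = (1 : MonoidAlgebra F G) := by
    rw [simpleQuantity, Finset.sum_singleton, MonoidAlgebra.one_def]
  exact h1 ▸ Submodule.subset_span ⟨{1}, S.one_mem, rfl⟩

lemma SchurRing.mul_mem_carrier (S : SchurRing F G) {a b : MonoidAlgebra F G}
    (ha : a ∈ S.carrier) (hb : b ∈ S.carrier) : a * b ∈ S.carrier := by
  have key : ∀ D ∈ S.classes, ∀ c ∈ S.carrier, simpleQuantity F D * c ∈ S.carrier := by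
    intro D hD c hc
    have hle : S.carrier ≤
        Submodule.comap (LinearMap.mulLeft F (simpleQuantity F D)) S.carrier := by
      refine Submodule.span_le.mpr ?_
      rintro _ ⟨E, hE, rfl⟩
      exact Submodule.mem_comap.mpr (by simpa [SchurRing.carrier, schurModule] using S.mul_mem D hD E hE)
    simpa using hle hc
  have hle : S.carrier ≤ Submodule.comap (LinearMap.mulRight F b) S.carrier := by
    refine Submodule.span_le.mpr ?_
    rintro _ ⟨D, hD, rfl⟩
    exact Submodule.mem_comap.mpr (by simpa using key D hD b hb)
  simpa using hle ha

lemma SchurRing.pow_mem_carrier (S : SchurRing F G) {a : MonoidAlgebra F G}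
    (ha : a ∈ S.carrier) (n : ℕ) : a ^ n ∈ S.carrier := by
  induction n with
  | zero => rw [pow_zero]; exact S.one_mem_carrier
  | succ n ih => rw [pow_succ]; exact S.mul_mem_carrier ih ha

/-! ### Properties of `fresh` -/

lemma fresh_def (m : ℤ) (α : MonoidAlgebra F G) :
    (fresh m α).coeff = Finsupp.mapDomain (fun g : G => g ^ m) α.coeff := by
  rw [fresh, MonoidAlgebra.coeff_sum]; rfl

lemma fresh_fresh (a b : ℤ) (α : MonoidAlgebra F G) :
    fresh a (fresh b α) = fresh (b * a) α := by
  rw [← MonoidAlgebra.coeff_inj, fresh_def, fresh_def, fresh_def, ← Finsupp.mapDomain_comp]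
  congr 1
  funext g
  simp only [Function.comp_apply]
  exact (zpow_mul g b a).symm

lemma fresh_one (α : MonoidAlgebra F G) : fresh 1 α = α := by
  have h : (fun g : G => g ^ (1 : ℤ)) = id := funext fun g => zpow_one g
  rw [← MonoidAlgebra.coeff_inj, fresh_def, h, Finsupp.mapDomain_id]

lemma fresh_simpleQuantity [DecidableEq G] (m : ℤ)
    (hinj : Function.Injective fun g : G => g ^ m) (C : Finset G) :
    fresh m (simpleQuantity F C) = simpleQuantity F (C.image fun g => g ^ m) := by
  have h : fresh m (simpleQuantity F C) = ∑ g ∈ C, MonoidAlgebra.single (g ^ m) (1 : F) := by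
    rw [← MonoidAlgebra.coeff_inj, fresh_def]
    simp only [simpleQuantity]
    rw [MonoidAlgebra.coeff_sum, MonoidAlgebra.coeff_sum, Finsupp.mapDomain_finset_sum]
    exact Finset.sum_congr rfl fun g _ => Finsupp.mapDomain_single
  rw [h]
  simp only [simpleQuantity]
  rw [Finset.sum_image (f := fun h => MonoidAlgebra.single h (1 : F)) (fun x _ y _ h => hinj h)]

lemma zpow_injective_of_torsionFree (hG : ∀ g : G, g ≠ 1 → ¬IsOfFinOrder g) {m : ℤ} (hm : m ≠ 0) :
    Function.Injective fun g : G => g ^ m := by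
  intro a b hab
  simp only at hab
  by_contra hne
  have hx : a * b⁻¹ ≠ 1 := by
    intro h
    exact hne (by rwa [mul_inv_eq_one] at h)
  have h1 : (a * b⁻¹) ^ m = 1 := by
    rw [mul_zpow, inv_zpow, hab, mul_inv_cancel]
  have h2 : (a * b⁻¹) ^ (m.natAbs : ℤ) = 1 := by
    rcases Int.natAbs_eq m with he | he
    · rw [← he, h1]
    · rw [← neg_neg (m.natAbs : ℤ), ← he, zpow_neg, h1, inv_one]
  have h3 : (a * b⁻¹) ^ m.natAbs = 1 := by rwa [zpow_natCast] at h2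
  exact hG _ hx (isOfFinOrder_iff_pow_eq_one.mpr
    ⟨m.natAbs, Int.natAbs_pos.mpr hm, h3⟩)

/-- If `fresh m` maps each class sum into the Schur module, it maps the whole
Schur module into itself. -/
lemma SchurRing.fresh_mem_of_classes (S : SchurRing F G) (m : ℤ)
    (hcl : ∀ C ∈ S.classes, fresh m (simpleQuantity F C) ∈ S.carrier)
    {α : MonoidAlgebra F G} (hα : α ∈ S.carrier) : fresh m α ∈ S.carrier := by
  have hfx : ∀ x : MonoidAlgebra F G,
      MonoidAlgebra.mapDomainLinearMap F F (fun g : G => g ^ m) x = fresh m x := fun x =>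
    MonoidAlgebra.coeff_injective (by rw [MonoidAlgebra.coeff_mapDomainLinearMap, fresh_def])
  have hle : S.carrier ≤
      Submodule.comap (MonoidAlgebra.mapDomainLinearMap F F fun g : G => g ^ m) S.carrier := by
    refine Submodule.span_le.mpr ?_
    rintro _ ⟨C, hC, rfl⟩
    exact Submodule.mem_comap.mpr (by rw [hfx]; exact hcl C hC)
  exact hfx α ▸ Submodule.mem_comap.mp (hle hα)

/-- The key case: prime exponents, via the multinomial congruence mod `p`. -/
lemma SchurRing.fresh_prime_simpleQuantity [CharZero F] (hG : ∀ g : G, g ≠ 1 → ¬IsOfFinOrder g)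
    (S : SchurRing F G) {p : ℕ} (hp : p.Prime) {C : Finset G} (hC : C ∈ S.classes) :
    fresh (p : ℤ) (simpleQuantity F C) ∈ S.carrier := by
  classical
  haveI : Fact p.Prime := ⟨hp⟩
  have hpz : (p : ℤ) ≠ 0 := Int.natCast_ne_zero.mpr hp.ne_zero
  have hinj : Function.Injective fun g : G => g ^ (p : ℤ) :=
    zpow_injective_of_torsionFree hG hpz
  rw [fresh_simpleQuantity _ hinj]
  apply S.mem_of_isConst
  intro D hD d₁ hd₁ d₂ hd₂
  rw [simpleQuantity_coeff, simpleQuantity_coeff]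
  suffices hiff : (d₁ ∈ C.image fun g : G => g ^ (p : ℤ)) ↔
      (d₂ ∈ C.image fun g : G => g ^ (p : ℤ)) from if_congr hiff rfl rfl
  -- the natural-number model of the class sum
  set cN : MonoidAlgebra ℕ G := ∑ g ∈ C, MonoidAlgebra.single g 1 with hcN
  have hcastF : natCastMA F cN = simpleQuantity F C := by
    rw [hcN, map_sum, simpleQuantity]
    exact Finset.sum_congr rfl fun g _ => by rw [natCastMA_single, Nat.cast_one]
  have hcastZ : natCastMA (ZMod p) cN = simpleQuantity (ZMod p) C := by
    rw [hcN, map_sum, simpleQuantity]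
    exact Finset.sum_congr rfl fun g _ => by rw [natCastMA_single, Nat.cast_one]
  -- the F side: coefficients of `(C̄)^p` are equal on the class D
  have hβmem : (simpleQuantity F C) ^ p ∈ S.carrier :=
    S.pow_mem_carrier (Submodule.subset_span ⟨C, hC, rfl⟩) p
  have hβc : ((simpleQuantity F C) ^ p).coeff d₁ = ((simpleQuantity F C) ^ p).coeff d₂ :=
    S.isConst_of_mem hβmem D hD d₁ hd₁ d₂ hd₂
  have hNcoeff : ∀ d : G, (((cN ^ p).coeff d : ℕ) : F) = ((simpleQuantity F C) ^ p).coeff d := by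
    intro d
    rw [← natCastMA_coeff, map_pow, hcastF]
  have hNeq : (cN ^ p).coeff d₁ = (cN ^ p).coeff d₂ := by
    have : (((cN ^ p).coeff d₁ : ℕ) : F) = (((cN ^ p).coeff d₂ : ℕ) : F) := by
      rw [hNcoeff, hNcoeff, hβc]
    exact_mod_cast this
  -- the ZMod p side: Frobenius
  haveI : CharP (MonoidAlgebra (ZMod p) G) p := by
    refine charP_of_injective_ringHom
      (f := (MonoidAlgebra.singleOneRingHom : ZMod p →+* MonoidAlgebra (ZMod p) G)) ?_ p
    intro x y hxy
    have := Finsupp.single_injective (1 : G) (by exact congrArg MonoidAlgebra.coeff hxy)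
    exact this
  haveI : ExpChar (MonoidAlgebra (ZMod p) G) p := ExpChar.prime hp
  have hfrob : (simpleQuantity (ZMod p) C) ^ p =
      simpleQuantity (ZMod p) (C.image fun g : G => g ^ (p : ℤ)) := by
    rw [simpleQuantity, sum_pow_char]
    rw [Finset.sum_congr rfl fun g _ => ?_]
    · exact (Finset.sum_image fun x _ y _ h => hinj h).symm
    · rw [MonoidAlgebra.single_pow, one_pow, ← zpow_natCast]
  have hZcoeff : ∀ d : G, (((cN ^ p).coeff d : ℕ) : ZMod p) =
      (if d ∈ C.image fun g : G => g ^ (p : ℤ) then (1 : ZMod p) else 0) := by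
    intro d
    rw [← natCastMA_coeff, map_pow, hcastZ, hfrob,
      simpleQuantity_coeff]
  have hZeq : (if d₁ ∈ C.image fun g : G => g ^ (p : ℤ) then (1 : ZMod p) else 0) =
      (if d₂ ∈ C.image fun g : G => g ^ (p : ℤ) then (1 : ZMod p) else 0) := by
    rw [← hZcoeff, ← hZcoeff, hNeq]
  by_cases h1 : d₁ ∈ C.image fun g : G => g ^ (p : ℤ) <;>
    by_cases h2 : d₂ ∈ C.image fun g : G => g ^ (p : ℤ)
  · exact iff_of_true h1 h2
  · rw [if_pos h1, if_neg h2] at hZeq; exact absurd hZeq one_ne_zero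
  · rw [if_neg h1, if_pos h2] at hZeq; exact absurd hZeq.symm one_ne_zero
  · exact iff_of_false h1 h2

lemma SchurRing.fresh_neg_one_simpleQuantity (S : SchurRing F G)
    {C : Finset G} (hC : C ∈ S.classes) :
    fresh (-1) (simpleQuantity F C) ∈ S.carrier := by
  classical
  have hinj : Function.Injective fun g : G => g ^ (-1 : ℤ) := by
    intro a b h
    simpa [zpow_neg_one] using h
  rw [fresh_simpleQuantity _ hinj]
  obtain ⟨D, hD, hDiff⟩ := S.inv_mem C hC
  have himg : C.image (fun g : G => g ^ (-1 : ℤ)) = D := by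
    ext g
    rw [Finset.mem_image, hDiff g]
    constructor
    · rintro ⟨c, hc, rfl⟩
      rw [zpow_neg_one, inv_inv]; exact hc
    · intro h
      exact ⟨g⁻¹, h, by rw [zpow_neg_one, inv_inv]⟩
  rw [himg]
  exact Submodule.subset_span ⟨D, hD, rfl⟩

/-- positive natural exponents -/
lemma SchurRing.fresh_nat_mem [CharZero F] (hG : ∀ g : G, g ≠ 1 → ¬IsOfFinOrder g)
    (S : SchurRing F G) (n : ℕ) (hn : 0 < n) {α : MonoidAlgebra F G}
    (hα : α ∈ S.carrier) : fresh (n : ℤ) α ∈ S.carrier := by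
  induction n using Nat.strong_induction_on generalizing α with
  | _ n ih =>
    rcases eq_or_ne n 1 with rfl | hn1
    · rw [Nat.cast_one, fresh_one]; exact hα
    · have hp : n.minFac.Prime := Nat.minFac_prime hn1
      have hdvd : n.minFac ∣ n := Nat.minFac_dvd n
      have hkpos : 0 < n / n.minFac := Nat.div_pos (Nat.le_of_dvd hn hdvd) hp.pos
      have hklt : n / n.minFac < n := Nat.div_lt_self hn hp.one_lt
      have hcomp : fresh (n : ℤ) α =
          fresh (n.minFac : ℤ) (fresh ((n / n.minFac : ℕ) : ℤ) α) := by
        rw [fresh_fresh, ← Nat.cast_mul, Nat.div_mul_cancel hdvd]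
      rw [hcomp]
      have h1 : fresh ((n / n.minFac : ℕ) : ℤ) α ∈ S.carrier :=
        ih (n / n.minFac) hklt hkpos hα
      exact S.fresh_mem_of_classes (n.minFac : ℤ)
        (fun C hC => S.fresh_prime_simpleQuantity hG hp hC) h1

end Schur

theorem stmt12 {F G : Type*} [Field F] [CharZero F] [CommGroup G]
    (hG : ∀ g : G, g ≠ 1 → ¬IsOfFinOrder g) (S : SchurRing F G)
    (α : MonoidAlgebra F G) (hα : α ∈ S.carrier) (m : ℤ) :
    fresh m α ∈ S.carrier := by
  rcases eq_or_ne m 0 with rfl | hm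
  · -- `fresh 0 α` is a scalar multiple of the identity class sum
    have h0 : fresh 0 α = MonoidAlgebra.single (1 : G) (∑ g ∈ α.coeff.support, α.coeff g) := by
      rw [fresh]
      rw [Finset.sum_congr rfl fun g _ => by rw [zpow_zero]]
      exact (map_sum (MonoidAlgebra.singleAddHom (1 : G)) (fun g => α.coeff g) α.coeff.support).symm
    have h1 : MonoidAlgebra.single (1 : G) (∑ g ∈ α.coeff.support, α.coeff g) =
        (∑ g ∈ α.coeff.support, α.coeff g) • simpleQuantity F {1} := by
      rw [simpleQuantity, Finset.sum_singleton, MonoidAlgebra.smul_single, smul_eq_mul, mul_one]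
    rw [h0, h1]
    exact Submodule.smul_mem _ _ (Submodule.subset_span ⟨{1}, S.one_mem, rfl⟩)
  · rcases Int.natAbs_eq m with he | he
    · rw [he]
      exact S.fresh_nat_mem hG m.natAbs (Int.natAbs_pos.mpr hm) hα
    · have hneg : fresh (-1) α ∈ S.carrier :=
        S.fresh_mem_of_classes (-1) (fun C hC => S.fresh_neg_one_simpleQuantity hC) hα
      have hcomp : fresh m α = fresh ((m.natAbs : ℕ) : ℤ) (fresh (-1) α) := by
        rw [fresh_fresh]
        congr 1
        omega
      rw [hcomp]
      exact S.fresh_nat_mem hG m.natAbs (Int.natAbs_pos.mpr hm) hneg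
end

section
/- Let S be a Schur ring over the infinite cyclic group Z = ⟨z⟩, and let C be the class of the partition D(S) containing z. Then C = {z} or C = {z, z^{-1}}. -/
set_option linter.unusedSectionVars false in
section
open Real intervalIntegral
namespace Stmt13

noncomputable def wc (A : Finset ℤ) : ℕ → ℤ → ℕ
  | 0, g => if g = 0 then 1 else 0
  | (k+1), g => ∑ s ∈ A, wc A k (g - s)

lemma sum_neg_reindex {A : Finset ℤ} (hsym : ∀ s : ℤ, s ∈ A ↔ -s ∈ A) (f : ℤ → ℕ) :
    ∑ s ∈ A, f (-s) = ∑ s ∈ A, f s := by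
  refine Finset.sum_equiv (Equiv.neg ℤ) (fun i => ?_) (fun i _ => rfl)
  simpa using hsym i

noncomputable def phi (A : Finset ℤ) (θ : ℝ) : ℝ := ∑ s ∈ A, Real.cos (s * θ)

lemma phi_cont (A : Finset ℤ) : Continuous (phi A) := by
  refine continuous_finset_sum _ fun s _ => ?_
  exact Real.continuous_cos.comp (continuous_const.mul continuous_id)

lemma integral_cos_int (j : ℤ) :
    ∫ θ in (0:ℝ)..(2*π), Real.cos (j * θ) = if j = 0 then 2*π else 0 := by
  rcases eq_or_ne j 0 with h | h
  · simp [h]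
  · have hj : (j:ℝ) ≠ 0 := Int.cast_ne_zero.mpr h
    rw [if_neg h]
    rw [intervalIntegral.integral_comp_mul_left Real.cos hj]
    rw [integral_cos]
    have h1 : (j:ℝ) * (2*π) = (2*j : ℤ) * π := by push_cast; ring
    have h2 : Real.sin ((j:ℝ) * (2*π)) = 0 := by rw [h1]; exact Real.sin_int_mul_pi _
    simp [h2]

lemma cont_term (A : Finset ℤ) (k : ℕ) (c : ℝ) :
    Continuous fun θ => (phi A θ)^k * Real.cos (c*θ) :=
  ((phi_cont A).pow k).mul (Real.continuous_cos.comp (continuous_const.mul continuous_id))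

lemma cos_mul_cos (x y : ℝ) :
    Real.cos x * Real.cos y = (Real.cos (x - y) + Real.cos (x + y)) / 2 := by
  rw [Real.cos_sub, Real.cos_add]; ring

lemma integral_phi_pow (A : Finset ℤ) (hsym : ∀ s : ℤ, s ∈ A ↔ -s ∈ A) (k : ℕ) (j : ℤ) :
    ∫ θ in (0:ℝ)..(2*π), (phi A θ)^k * Real.cos (j * θ) = 2*π*(wc A k j) := by
  induction k generalizing j with
  | zero =>
    simp only [pow_zero, one_mul, integral_cos_int, wc]
    rcases eq_or_ne j 0 with h | h <;> simp [h]
  | succ k ih =>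
    have hpt : ∀ θ : ℝ, (phi A θ)^(k+1) * Real.cos (j * θ) =
        ∑ s ∈ A, ((phi A θ)^k * Real.cos ((j - s : ℤ) * θ) / 2
          + (phi A θ)^k * Real.cos ((j + s : ℤ) * θ) / 2) := by
      intro θ
      rw [pow_succ]
      have : phi A θ = ∑ s ∈ A, Real.cos (s * θ) := rfl
      rw [mul_assoc, this, Finset.sum_mul, Finset.mul_sum]
      refine Finset.sum_congr rfl fun s _ => ?_
      rw [cos_mul_cos]
      have e1 : (s:ℝ) * θ - j * θ = -(((j - s : ℤ):ℝ) * θ) := by push_cast; ring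
      have e2 : (s:ℝ) * θ + j * θ = ((j + s : ℤ):ℝ) * θ := by push_cast; ring
      rw [e1, e2, Real.cos_neg]
      ring
    rw [intervalIntegral.integral_congr (g := fun θ => ∑ s ∈ A,
        ((phi A θ)^k * Real.cos ((j - s : ℤ) * θ) / 2
          + (phi A θ)^k * Real.cos ((j + s : ℤ) * θ) / 2)) (fun θ _ => hpt θ)]
    rw [intervalIntegral.integral_finset_sum]
    · have : ∀ s ∈ A, (∫ θ in (0:ℝ)..(2*π),
          ((phi A θ)^k * Real.cos ((j - s : ℤ) * θ) / 2
          + (phi A θ)^k * Real.cos ((j + s : ℤ) * θ) / 2)) =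
          π * (wc A k (j - s)) + π * (wc A k (j + s)) := by
        intro s _
        rw [intervalIntegral.integral_add, intervalIntegral.integral_div,
          intervalIntegral.integral_div, ih, ih]
        · ring
        · exact ((cont_term A k _).div_const 2).intervalIntegrable _ _
        · exact ((cont_term A k _).div_const 2).intervalIntegrable _ _
      rw [Finset.sum_congr rfl this, Finset.sum_add_distrib,
        ← Finset.mul_sum, ← Finset.mul_sum, ← Nat.cast_sum, ← Nat.cast_sum]
      have hre : ∑ s ∈ A, wc A k (j + s) = ∑ s ∈ A, wc A k (j - s) := by
        have h0 := sum_neg_reindex hsym (fun s => wc A k (j + s))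
        simp only [sub_eq_add_neg]
        exact h0.symm
      rw [hre]
      have : wc A (k+1) j = ∑ s ∈ A, wc A k (j - s) := rfl
      rw [this]
      ring
    · intro s _
      exact (((cont_term A k _).div_const 2).add ((cont_term A k _).div_const 2)).intervalIntegrable _ _

lemma wc_neg {A : Finset ℤ} (hsym : ∀ s : ℤ, s ∈ A ↔ -s ∈ A) (k : ℕ) (g : ℤ) :
    wc A k (-g) = wc A k g := by
  induction k generalizing g with
  | zero => simp [wc, neg_eq_zero]
  | succ k ih =>
    show ∑ s ∈ A, wc A k (-g - s) = ∑ s ∈ A, wc A k (g - s)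
    calc ∑ s ∈ A, wc A k (-g - s) = ∑ s ∈ A, wc A k (g + s) := by
          refine Finset.sum_congr rfl fun s _ => ?_
          rw [show -g - s = -(g + s) by ring, ih]
      _ = ∑ s ∈ A, wc A k (g - s) := by
          have h0 := sum_neg_reindex hsym (fun s => wc A k (g + s))
          simp only [sub_eq_add_neg]
          exact h0.symm


theorem core (A : Finset ℤ) (hsym : ∀ s : ℤ, s ∈ A ↔ -s ∈ A) (h1 : (1:ℤ) ∈ A)
    {a : ℤ} (ha2 : 2 ≤ a)
    (H : ∀ k : ℕ, wc A k a = wc A k 1) : False := by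
  have hπpos := Real.pi_pos
  set M : ℝ := (A.card : ℝ) with hMdef
  have hcard1 : 1 ≤ A.card := Finset.card_pos.mpr ⟨1, h1⟩
  have hM1 : 1 ≤ M := by rw [hMdef]; exact_mod_cast hcard1
  have haR : (2:ℝ) ≤ (a:ℝ) := by exact_mod_cast ha2
  have haRpos : (0:ℝ) < a := by linarith
  set θ₀ : ℝ := π / a with hθ₀def
  have hθ₀pos : 0 < θ₀ := div_pos hπpos haRpos
  have hθ₀le : θ₀ ≤ π / 2 := by
    apply div_le_div_of_nonneg_left hπpos.le (by norm_num) haR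
  have hθ₀ltπ : θ₀ < π := lt_of_le_of_lt hθ₀le (by linarith)
  set ε : ℝ := 1 - Real.cos θ₀ with hεdef
  have hεpos : 0 < ε := by
    have : Real.cos θ₀ < Real.cos 0 :=
      Real.cos_lt_cos_of_nonneg_of_le_pi le_rfl hθ₀ltπ.le hθ₀pos
    rw [Real.cos_zero] at this; linarith
  have hεle1 : ε ≤ 2 := by
    have := Real.neg_one_le_cos θ₀; simp only [hεdef]; linarith
  set r : ℝ := M - ε with hrdef
  set h : ℝ → ℝ := fun x => max (x - r) 0 with hhdef
  have hcont : Continuous h := (continuous_id.sub continuous_const).max continuous_const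
  have hnn : ∀ x, 0 ≤ h x := fun x => le_max_right _ _
  -- f-related facts
  set f : ℝ → ℝ := fun θ => Real.cos θ - Real.cos ((a:ℝ)*θ) with hfdef
  have fcont : Continuous f :=
    Real.continuous_cos.sub (Real.continuous_cos.comp (continuous_const.mul continuous_id))
  have faux : ∀ θ : ℝ, 0 ≤ θ → θ ≤ θ₀ → Real.cos ((a:ℝ)*θ) ≤ Real.cos θ := by
    intro θ h0 hle
    apply Real.cos_le_cos_of_nonneg_of_le_pi h0
    · calc (a:ℝ)*θ ≤ a * θ₀ := by nlinarith
        _ = π := by rw [hθ₀def]; field_simp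
    · nlinarith
  have fpos : ∀ θ : ℝ, 0 < θ → θ ≤ θ₀ → 0 < f θ := by
    intro θ h0 hle
    have : Real.cos ((a:ℝ)*θ) < Real.cos θ := by
      apply Real.cos_lt_cos_of_nonneg_of_le_pi h0.le
      · calc (a:ℝ)*θ ≤ a * θ₀ := by nlinarith
          _ = π := by rw [hθ₀def]; field_simp
      · nlinarith
    simp only [hfdef]; linarith
  have fnonneg : ∀ θ : ℝ, 0 ≤ θ → θ ≤ θ₀ → 0 ≤ f θ := by
    intro θ h0 hle; have := faux θ h0 hle; simp only [hfdef]; linarith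
  have fbound : ∀ θ : ℝ, |f θ| ≤ 2 := by
    intro θ
    have h1' := Real.neg_one_le_cos θ; have h2 := Real.cos_le_one θ
    have h3 := Real.neg_one_le_cos ((a:ℝ)*θ); have h4 := Real.cos_le_one ((a:ℝ)*θ)
    rw [abs_le]; constructor <;> simp only [hfdef] <;> linarith
  -- phi facts
  have phiIcc : ∀ θ, phi A θ ∈ Set.Icc (-M) M := by
    intro θ
    have habs : |phi A θ| ≤ M := by
      calc |phi A θ| ≤ ∑ s ∈ A, |Real.cos (s*θ)| := Finset.abs_sum_le_sum_abs _ _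
        _ ≤ ∑ _s ∈ A, (1:ℝ) := Finset.sum_le_sum fun s _ => Real.abs_cos_le_one _
        _ = M := by rw [Finset.sum_const, nsmul_eq_mul, mul_one]
    rw [abs_le] at habs; exact ⟨habs.1, habs.2⟩
  have phi0 : phi A 0 = M := by
    simp [phi, Finset.sum_const, nsmul_eq_mul, hMdef]
  have phimid : ∀ θ : ℝ, θ₀ ≤ θ → θ ≤ 2*π - θ₀ → phi A θ ≤ r := by
    intro θ hl hu
    have hcosθ : Real.cos θ ≤ Real.cos θ₀ := by
      rcases le_or_gt θ π with hc | hc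
      · exact Real.cos_le_cos_of_nonneg_of_le_pi hθ₀pos.le hc hl
      · have : Real.cos θ = Real.cos (2*π - θ) := (Real.cos_two_pi_sub θ).symm
        rw [this]
        apply Real.cos_le_cos_of_nonneg_of_le_pi hθ₀pos.le (by linarith) (by linarith)
    have hsplit : phi A θ = Real.cos (((1:ℤ):ℝ) * θ) + ∑ s ∈ A.erase 1, Real.cos (s*θ) :=
      (Finset.add_sum_erase A (fun s : ℤ => Real.cos (s*θ)) h1).symm
    have herase : ∑ s ∈ A.erase 1, Real.cos (s*θ) ≤ (M - 1) := by
      calc ∑ s ∈ A.erase 1, Real.cos (s*θ) ≤ ∑ _s ∈ A.erase 1, (1:ℝ) :=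
            Finset.sum_le_sum fun s _ => Real.cos_le_one _
        _ = ((A.erase 1).card : ℝ) := by rw [Finset.sum_const, nsmul_eq_mul, mul_one]
        _ = M - 1 := by
            rw [Finset.card_erase_of_mem h1, Nat.cast_sub hcard1]; simp [hMdef]
    have : phi A θ ≤ Real.cos θ + (M - 1) := by
      rw [hsplit]; push_cast; simp only [one_mul]; linarith
    simp only [hrdef, hεdef]; linarith
  -- integral of h(phi)*f is zero
  have hk0 : ∀ k : ℕ, ∫ θ in (0:ℝ)..(2*π), (phi A θ)^k * f θ = 0 := by
    intro k
    have e : ∀ θ ∈ Set.uIcc (0:ℝ) (2*π), (fun θ => (phi A θ)^k * f θ) θ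
        = (phi A θ)^k * Real.cos (((1:ℤ):ℝ)*θ) - (phi A θ)^k * Real.cos (((a:ℤ):ℝ)*θ) := by
      intro θ _; simp only [hfdef]; push_cast; ring
    rw [intervalIntegral.integral_congr e, intervalIntegral.integral_sub
        ((cont_term A k _).intervalIntegrable _ _) ((cont_term A k _).intervalIntegrable _ _),
      integral_phi_pow A hsym k 1, integral_phi_pow A hsym k a, H k]
    ring
  have hpoly : ∀ p : Polynomial ℝ, ∫ θ in (0:ℝ)..(2*π), (p.eval (phi A θ)) * f θ = 0 := by
    intro p
    have e : ∀ θ ∈ Set.uIcc (0:ℝ) (2*π), (fun θ => p.eval (phi A θ) * f θ) θ =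
        ∑ i ∈ Finset.range (p.natDegree + 1), p.coeff i * ((phi A θ)^i * f θ) := by
      intro θ _
      dsimp only
      rw [Polynomial.eval_eq_sum_range, Finset.sum_mul]
      exact Finset.sum_congr rfl fun i _ => by ring
    rw [intervalIntegral.integral_congr e, intervalIntegral.integral_finset_sum]
    · refine Finset.sum_eq_zero fun i _ => ?_
      rw [intervalIntegral.integral_const_mul, hk0 i, mul_zero]
    · intro i _
      exact (continuous_const.mul (((phi_cont A).pow i).mul fcont)).intervalIntegrable _ _
  have hzero : ∫ θ in (0:ℝ)..(2*π), h (phi A θ) * f θ = 0 := by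
    by_contra hne
    set E : ℝ := ∫ θ in (0:ℝ)..(2*π), h (phi A θ) * f θ with hEdef
    have hEpos : 0 < |E| := abs_pos.mpr hne
    set δ : ℝ := |E| / (2 * (2 * (2*π))) with hδdef
    have hδpos : 0 < δ := by positivity
    obtain ⟨p, hp⟩ := exists_polynomial_near_of_continuousOn (-M) M h hcont.continuousOn δ hδpos
    have key : |E| ≤ (2*δ) * |2*π - 0| := by
      have hsub : E = ∫ θ in (0:ℝ)..(2*π), (h (phi A θ) - p.eval (phi A θ)) * f θ := by
        have : (fun θ => (h (phi A θ) - p.eval (phi A θ)) * f θ)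
            = fun θ => h (phi A θ) * f θ - p.eval (phi A θ) * f θ := by
          funext θ; ring
        have i1 : IntervalIntegrable (fun θ : ℝ => h (phi A θ) * f θ)
            MeasureTheory.volume 0 (2*π) :=
          ((hcont.comp (phi_cont A)).mul fcont).intervalIntegrable _ _
        have i2 : IntervalIntegrable (fun θ : ℝ => p.eval (phi A θ) * f θ)
            MeasureTheory.volume 0 (2*π) :=
          ((p.continuous.comp (phi_cont A)).mul fcont).intervalIntegrable _ _
        rw [this, intervalIntegral.integral_sub i1 i2, hpoly p]
        simp [hEdef]
      rw [hsub, ← Real.norm_eq_abs]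
      apply intervalIntegral.norm_integral_le_of_norm_le_const
      intro x _
      have h1' := hp (phi A x) (phiIcc x)
      have h2 := fbound x
      rw [Real.norm_eq_abs, abs_mul]
      have : |h (phi A x) - p.eval (phi A x)| ≤ δ := by
        rw [abs_sub_comm]; exact h1'.le
      calc |h (phi A x) - p.eval (phi A x)| * |f x| ≤ δ * 2 := by
            apply mul_le_mul this h2 (abs_nonneg _) hδpos.le
        _ = 2*δ := by ring
    have h2π : |2*π - 0| = 2*π := by
      rw [sub_zero]; exact abs_of_pos (by linarith)
    rw [h2π, hδdef] at key
    have heq : 2 * (|E| / (2 * (2 * (2*π)))) * (2*π) = |E|/2 := by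
      field_simp
    rw [heq] at key
    linarith
  -- find the witness point
  obtain ⟨θs, hθs0, hθsθ₀, hθsr⟩ : ∃ θs : ℝ, 0 < θs ∧ θs < θ₀ ∧ r < phi A θs := by
    have hopen : IsOpen (phi A ⁻¹' Set.Ioi r) := (phi_cont A).isOpen_preimage _ isOpen_Ioi
    have h0mem : (0:ℝ) ∈ phi A ⁻¹' Set.Ioi r := by
      simp only [Set.mem_preimage, Set.mem_Ioi, phi0, hrdef]; linarith
    obtain ⟨d, hdpos, hball⟩ := Metric.isOpen_iff.mp hopen 0 h0mem
    refine ⟨min (d/2) (θ₀/2), by positivity, ?_, ?_⟩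
    · calc min (d/2) (θ₀/2) ≤ θ₀/2 := min_le_right _ _
        _ < θ₀ := by linarith
    · have : min (d/2) (θ₀/2) ∈ Metric.ball (0:ℝ) d := by
        rw [Metric.mem_ball, Real.dist_eq, sub_zero, abs_of_pos (by positivity)]
        calc min (d/2) (θ₀/2) ≤ d/2 := min_le_left _ _
          _ < d := by linarith
      exact hball this
  -- continuity of the integrand
  set g : ℝ → ℝ := fun θ => h (phi A θ) * f θ with hgdef
  have gcont : Continuous g := (hcont.comp (phi_cont A)).mul fcont
  have gnn : ∀ θ : ℝ, 0 ≤ θ → θ ≤ θ₀ → 0 ≤ g θ :=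
    fun θ h0 hle => mul_nonneg (hnn _) (fnonneg θ h0 hle)
  have gθs : 0 < g θs := by
    apply mul_pos _ (fpos θs hθs0 hθsθ₀.le)
    simp only [hhdef]
    rw [lt_max_iff]; left; linarith
  -- left integral positive
  have hleft : 0 < ∫ θ in (0:ℝ)..θ₀, g θ := by
    obtain ⟨d, hdpos, hd⟩ := Metric.continuousAt_iff.mp (gcont.continuousAt (x := θs))
      (g θs / 2) (by linarith)
    set η : ℝ := min (d/2) (min (θs/2) ((θ₀ - θs)/2)) with hηdef
    have hηpos : 0 < η := by
      apply lt_min (by linarith) (lt_min (by linarith) (by linarith))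
    have hηd : η < d := lt_of_le_of_lt (min_le_left _ _) (by linarith)
    have hηθs : η ≤ θs/2 := le_trans (min_le_right _ _) (min_le_left _ _)
    have hηθ₀ : η ≤ (θ₀ - θs)/2 := le_trans (min_le_right _ _) (min_le_right _ _)
    have hglb : ∀ x ∈ Set.Icc (θs - η) (θs + η), g θs / 2 ≤ g x := by
      intro x hx
      have : dist x θs < d := by
        rw [Real.dist_eq, abs_lt]; cases' hx with hx1 hx2
        constructor <;> linarith
      have := hd this
      rw [Real.dist_eq, abs_lt] at this
      linarith [this.1]
    have hsplit : (∫ θ in (0:ℝ)..θ₀, g θ) =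
        (∫ θ in (0:ℝ)..(θs - η), g θ) + (∫ θ in (θs - η)..(θs + η), g θ)
          + (∫ θ in (θs + η)..θ₀, g θ) := by
      rw [intervalIntegral.integral_add_adjacent_intervals
          (gcont.intervalIntegrable _ _) (gcont.intervalIntegrable _ _),
        intervalIntegral.integral_add_adjacent_intervals
          (gcont.intervalIntegrable _ _) (gcont.intervalIntegrable _ _)]
    have i1 : 0 ≤ ∫ θ in (0:ℝ)..(θs - η), g θ := by
      apply intervalIntegral.integral_nonneg (by linarith)
      intro u hu; exact gnn u hu.1 (by cases' hu with _ h2; linarith)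
    have i3 : 0 ≤ ∫ θ in (θs + η)..θ₀, g θ := by
      apply intervalIntegral.integral_nonneg (by linarith)
      intro u hu; exact gnn u (by cases' hu with h1 _; linarith) hu.2
    have i2 : g θs / 2 * (2*η) ≤ ∫ θ in (θs - η)..(θs + η), g θ := by
      have := intervalIntegral.integral_mono_on (μ := MeasureTheory.volume) (a := θs - η) (b := θs + η)
        (f := fun _ => g θs / 2) (g := g) (by linarith)
        (continuous_const.intervalIntegrable _ _) (gcont.intervalIntegrable _ _) hglb
      rw [intervalIntegral.integral_const] at this
      calc g θs / 2 * (2*η) = (θs + η - (θs - η)) • (g θs / 2) := by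
            rw [smul_eq_mul]; ring
        _ ≤ _ := this
    rw [hsplit]
    have : 0 < g θs / 2 * (2*η) := by positivity
    linarith
  -- middle zero
  have hmidzero : (∫ θ in θ₀..(2*π - θ₀), g θ) = 0 := by
    have e : ∀ θ ∈ Set.uIcc θ₀ (2*π - θ₀), g θ = (fun _ => (0:ℝ)) θ := by
      intro θ hθ
      rw [Set.uIcc_of_le (by linarith)] at hθ
      have : phi A θ ≤ r := phimid θ hθ.1 hθ.2
      simp only [hgdef, hhdef]
      rw [max_eq_right (by linarith)]
      ring
    rw [intervalIntegral.integral_congr e, intervalIntegral.integral_const]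
    simp
  -- right nonneg
  have hright : 0 ≤ ∫ θ in (2*π - θ₀)..(2*π), g θ := by
    apply intervalIntegral.integral_nonneg (by linarith)
    intro u hu
    apply mul_nonneg (hnn _)
    have h2u : u = 2*π - (2*π - u) := by ring
    have hu1 : 0 ≤ 2*π - u := by cases' hu with _ h2; linarith
    have hu2 : 2*π - u ≤ θ₀ := by cases' hu with h1 _; linarith
    have e1 : Real.cos u = Real.cos (2*π - u) := by
      conv_lhs => rw [h2u]; rw [Real.cos_two_pi_sub]
    have e2 : Real.cos ((a:ℝ)*u) = Real.cos ((a:ℝ)*(2*π - u)) := by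
      have : (a:ℝ)*u = (a:ℝ)*(2*π) - (a:ℝ)*(2*π - u) := by ring
      rw [this, Real.cos_int_mul_two_pi_sub]
    have := faux (2*π - u) hu1 hu2
    simp only [hfdef]
    rw [e1, e2]
    linarith
  -- combine
  have htot : (∫ θ in (0:ℝ)..θ₀, g θ) + (∫ θ in θ₀..(2*π - θ₀), g θ)
      + (∫ θ in (2*π - θ₀)..(2*π), g θ) = 0 := by
    rw [intervalIntegral.integral_add_adjacent_intervals
        (gcont.intervalIntegrable _ _) (gcont.intervalIntegrable _ _),
      intervalIntegral.integral_add_adjacent_intervals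
        (gcont.intervalIntegrable _ _) (gcont.intervalIntegrable _ _)]
    exact hzero
  rw [hmidzero] at htot
  linarith

section Schur
variable {F G : Type*} [Field F] [Group G]

lemma simpleQuantity_apply [DecidableEq G] (C : Finset G) (g : G) :
    (simpleQuantity F C).coeff g = if g ∈ C then 1 else 0 := by
  classical
  rw [simpleQuantity, MonoidAlgebra.coeff_sum, Finsupp.finset_sum_apply]
  simp [MonoidAlgebra.coeff_single, Finsupp.single_apply]

lemma const_on (P : FinPartition G) {α : MonoidAlgebra F G}
    (hα : α ∈ Submodule.span F (simpleQuantity F '' P.classes))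
    {D : Finset G} (hD : D ∈ P.classes) {g h : G} (hg : g ∈ D) (hh : h ∈ D) :
    α.coeff g = α.coeff h := by
  classical
  induction hα using Submodule.span_induction with
  | mem x hx =>
    obtain ⟨C, hC, rfl⟩ := hx
    rw [simpleQuantity_apply, simpleQuantity_apply]
    by_cases hgC : g ∈ C
    · have hDC : D = C := (P.existsUnique_mem g).unique ⟨hD, hg⟩ ⟨hC, hgC⟩
      rw [if_pos hgC, if_pos (hDC ▸ hh)]
    · have hhC : h ∉ C := by
        intro hhC
        exact hgC (((P.existsUnique_mem h).unique ⟨hD, hh⟩ ⟨hC, hhC⟩) ▸ hg)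
      rw [if_neg hgC, if_neg hhC]
  | zero => simp
  | add x y hx hy ihx ihy => rw [MonoidAlgebra.coeff_add, Finsupp.add_apply, Finsupp.add_apply, ihx, ihy]
  | smul a x hx ih => rw [MonoidAlgebra.coeff_smul_apply, MonoidAlgebra.coeff_smul_apply, ih]

lemma gen_mul_mem (S : SchurRing F G) {C : Finset G} (hC : C ∈ S.classes)
    {y : MonoidAlgebra F G} (hy : y ∈ Submodule.span F (simpleQuantity F '' S.classes)) :
    simpleQuantity F C * y ∈ Submodule.span F (simpleQuantity F '' S.classes) := by
  induction hy using Submodule.span_induction with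
  | mem y hy =>
    obtain ⟨D, hD, rfl⟩ := hy
    exact S.mul_mem C hC D hD
  | zero => rw [mul_zero]; exact Submodule.zero_mem _
  | add y z hy hz ihy ihz => rw [mul_add]; exact Submodule.add_mem _ ihy ihz
  | smul a y hy ih => rw [mul_smul_comm]; exact Submodule.smul_mem _ _ ih

lemma mul_mem_span (S : SchurRing F G) {x y : MonoidAlgebra F G}
    (hx : x ∈ Submodule.span F (simpleQuantity F '' S.classes))
    (hy : y ∈ Submodule.span F (simpleQuantity F '' S.classes)) :
    x * y ∈ Submodule.span F (simpleQuantity F '' S.classes) := by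
  induction hx using Submodule.span_induction with
  | mem x hx =>
    obtain ⟨C, hC, rfl⟩ := hx
    exact gen_mul_mem S hC hy
  | zero => rw [zero_mul]; exact Submodule.zero_mem _
  | add x₁ x₂ h1 h2 ih1 ih2 => rw [add_mul]; exact Submodule.add_mem _ ih1 ih2
  | smul a x hx ih => rw [smul_mul_assoc]; exact Submodule.smul_mem _ _ ih

lemma pow_mem_span (S : SchurRing F G) {x : MonoidAlgebra F G}
    (hx : x ∈ Submodule.span F (simpleQuantity F '' S.classes)) (k : ℕ) :
    x^k ∈ Submodule.span F (simpleQuantity F '' S.classes) := by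
  induction k with
  | zero =>
    rw [pow_zero]
    have h1 : (1 : MonoidAlgebra F G) = simpleQuantity F ({1} : Finset G) := by
      rw [simpleQuantity, Finset.sum_singleton, MonoidAlgebra.one_def]
    rw [h1]
    exact Submodule.subset_span ⟨{1}, S.one_mem, rfl⟩
  | succ k ih => rw [pow_succ]; exact mul_mem_span S ih hx

end Schur
end Stmt13
end

open Stmt13 in
theorem stmt13 {F : Type*} [Field F] [CharZero F]
    (S : SchurRing F (Multiplicative ℤ))
    (z : Multiplicative ℤ) (hz : z = Multiplicative.ofAdd 1)
    (C : Finset (Multiplicative ℤ)) (hC : C ∈ S.classes) (hzC : z ∈ C) :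
    C = {z} ∨ C = {z, z⁻¹} := by
  classical
  subst hz
  set z : Multiplicative ℤ := Multiplicative.ofAdd 1 with hzdef
  obtain ⟨D, hD, hDinv⟩ := S.inv_mem C hC
  have hzD : z⁻¹ ∈ D := by rw [hDinv, inv_inv]; exact hzC
  set A : Finset (Multiplicative ℤ) := C ∪ D with hAdef
  have hCinv : ∀ g : Multiplicative ℤ, g ∈ C ↔ g⁻¹ ∈ D := by
    intro g; rw [hDinv g⁻¹, inv_inv]
  have hAsym : ∀ g : Multiplicative ℤ, g ∈ A ↔ g⁻¹ ∈ A := by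
    intro g
    simp only [hAdef, Finset.mem_union]
    constructor
    · rintro (hg | hg)
      · exact Or.inr ((hCinv g).mp hg)
      · exact Or.inl ((hDinv g).mp hg)
    · rintro (hg | hg)
      · exact Or.inr ((hDinv g).mpr hg)
      · exact Or.inl ((hCinv g).mpr hg)
  set ZA : Finset ℤ := A.image (fun g => Multiplicative.toAdd g) with hZAdef
  have hmemZA : ∀ n : ℤ, n ∈ ZA ↔ Multiplicative.ofAdd n ∈ A := by
    intro n
    simp only [hZAdef, Finset.mem_image]
    constructor
    · rintro ⟨g, hg, rfl⟩; simpa using hg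
    · intro h; exact ⟨Multiplicative.ofAdd n, h, rfl⟩
  have hsymZ : ∀ s : ℤ, s ∈ ZA ↔ -s ∈ ZA := by
    intro s; rw [hmemZA, hmemZA, ofAdd_neg]; exact hAsym _
  have h1Z : (1:ℤ) ∈ ZA := (hmemZA 1).mpr (Finset.mem_union_left _ hzC)
  have hαmem : simpleQuantity F A ∈ Submodule.span F (simpleQuantity F '' S.classes) := by
    by_cases hCD : C = D
    · have hAC : A = C := by rw [hAdef, ← hCD, Finset.union_self]
      exact Submodule.subset_span ⟨C, hC, by rw [hAC]⟩
    · have hdisj : Disjoint C D := by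
        rw [Finset.disjoint_left]
        intro g hgC hgD
        exact hCD ((S.existsUnique_mem g).unique ⟨hC, hgC⟩ ⟨hD, hgD⟩)
      have hsum : simpleQuantity F A = simpleQuantity F C + simpleQuantity F D := by
        rw [hAdef]
        exact Finset.sum_union hdisj
      rw [hsum]
      exact Submodule.add_mem _ (Submodule.subset_span ⟨C, hC, rfl⟩)
        (Submodule.subset_span ⟨D, hD, rfl⟩)
  have hcoeff : ∀ (k : ℕ) (n : ℤ),
      (simpleQuantity F A ^ k).coeff (Multiplicative.ofAdd n) = (wc ZA k n : F) := by
    intro k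
    induction k with
    | zero =>
      intro n
      rw [pow_zero, MonoidAlgebra.one_def, MonoidAlgebra.coeff_single, Finsupp.single_apply]
      show _ = ((if n = 0 then 1 else 0 : ℕ) : F)
      by_cases h0 : n = 0
      · subst h0; rw [if_pos, if_pos rfl] <;> simp
      · rw [if_neg, if_neg h0]
        · simp
        · intro h
          exact h0 (by simpa using h.symm)
    | succ k ih =>
      intro n
      rw [pow_succ]
      have hα : simpleQuantity F A
          = ∑ g ∈ A, (MonoidAlgebra.single g (1:F) : MonoidAlgebra F (Multiplicative ℤ)) := rfl
      have hmulsum : simpleQuantity F A ^ k * simpleQuantity F A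
          = ∑ g ∈ A, simpleQuantity F A ^ k
            * (MonoidAlgebra.single g (1:F) : MonoidAlgebra F (Multiplicative ℤ)) := by
        calc simpleQuantity F A ^ k * simpleQuantity F A
            = simpleQuantity F A ^ k * ∑ g ∈ A,
              (MonoidAlgebra.single g (1:F) : MonoidAlgebra F (Multiplicative ℤ)) := by
              rw [← hα]
          _ = _ := Finset.mul_sum _ _ _
      rw [hmulsum, MonoidAlgebra.coeff_sum, Finsupp.finset_sum_apply]
      have hterm : ∀ g ∈ A, (simpleQuantity F A ^ k
          * (MonoidAlgebra.single g (1:F) : MonoidAlgebra F (Multiplicative ℤ))).coeff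
          (Multiplicative.ofAdd n) = (wc ZA k (n - Multiplicative.toAdd g) : F) := by
        intro g hg
        rw [MonoidAlgebra.coeff_mul_single_apply, mul_one]
        have he : Multiplicative.ofAdd n * g⁻¹
            = Multiplicative.ofAdd (n - Multiplicative.toAdd g) := by
          rw [sub_eq_add_neg, ofAdd_add, ofAdd_neg, ofAdd_toAdd]
        rw [he, ih]
      rw [Finset.sum_congr rfl hterm]
      rw [show wc ZA (k+1) n = ∑ s ∈ ZA, wc ZA k (n - s) from rfl, Nat.cast_sum,
        hZAdef, Finset.sum_image (fun x _ y _ h => Multiplicative.toAdd.injective h)]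
  have hconstC : ∀ k : ℕ, ∀ g ∈ C,
      (simpleQuantity F A ^ k).coeff g = (simpleQuantity F A ^ k).coeff z :=
    fun k g hg => const_on S.toFinPartition (pow_mem_span S hαmem k) hC hg hzC
  have hconstD : ∀ k : ℕ, ∀ g ∈ D,
      (simpleQuantity F A ^ k).coeff g = (simpleQuantity F A ^ k).coeff z⁻¹ :=
    fun k g hg => const_on S.toFinPartition (pow_mem_span S hαmem k) hD hg hzD
  set a : ℤ := ZA.max' ⟨1, h1Z⟩ with hadef
  have haZA : a ∈ ZA := Finset.max'_mem _ _
  have hH : ∀ k : ℕ, wc ZA k a = wc ZA k 1 := by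
    intro k
    have hz1 : (simpleQuantity F A ^ k).coeff z = (wc ZA k 1 : F) := hcoeff k 1
    have hz1' : (simpleQuantity F A ^ k).coeff z⁻¹ = (wc ZA k 1 : F) := by
      rw [hzdef, ← ofAdd_neg, hcoeff k (-1), wc_neg hsymZ]
    have hAmem : Multiplicative.ofAdd a ∈ A := (hmemZA a).mp haZA
    have hfinal : (wc ZA k a : F) = (wc ZA k 1 : F) := by
      rw [← hcoeff k a]
      rcases Finset.mem_union.mp hAmem with h | h
      · rw [hconstC k _ h, hz1]
      · rw [hconstD k _ h, hz1']
    exact_mod_cast hfinal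
  have ha1 : a ≤ 1 := by
    by_contra hlt
    push_neg at hlt
    exact core ZA hsymZ h1Z (by omega) hH
  have hZA_sub : ∀ n ∈ ZA, n = 1 ∨ n = -1 := by
    intro n hn
    have hle1 : n ≤ 1 := le_trans (Finset.le_max' _ _ hn) ha1
    have hle2 : -n ≤ 1 := le_trans (Finset.le_max' _ _ ((hsymZ n).mp hn)) ha1
    have h0 : n ≠ 0 := by
      intro h0; subst h0
      have hmem : (Multiplicative.ofAdd (0:ℤ)) ∈ A := (hmemZA 0).mp hn
      rw [ofAdd_zero] at hmem
      rcases Finset.mem_union.mp hmem with h | h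
      · have hCeq : C = {1} := (S.existsUnique_mem 1).unique ⟨hC, h⟩
          ⟨S.one_mem, Finset.mem_singleton_self 1⟩
        rw [hCeq, Finset.mem_singleton] at hzC
        have h10 : (1:ℤ) = 0 := by simpa [hzdef] using hzC
        exact one_ne_zero h10
      · have hDeq : D = {1} := (S.existsUnique_mem 1).unique ⟨hD, h⟩
          ⟨S.one_mem, Finset.mem_singleton_self 1⟩
        rw [hDeq, Finset.mem_singleton] at hzD
        rw [hzdef, ← ofAdd_neg] at hzD
        have : (-1 : ℤ) = 0 := by simpa using hzD
        omega
    omega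
  have hCsub : ∀ g ∈ C, g = z ∨ g = z⁻¹ := by
    intro g hg
    have hmem : Multiplicative.toAdd g ∈ ZA :=
      Finset.mem_image_of_mem _ (Finset.mem_union_left _ hg)
    rcases hZA_sub _ hmem with h | h
    · left; rw [← ofAdd_toAdd g, h]
    · right; rw [← ofAdd_toAdd g, h, hzdef, ofAdd_neg]
  by_cases hzi : z⁻¹ ∈ C
  · right
    apply Finset.Subset.antisymm
    · intro g hg
      rcases hCsub g hg with h | h <;> simp [h]
    · intro g hg
      rw [Finset.mem_insert, Finset.mem_singleton] at hg
      rcases hg with h | h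
      · rw [h]; exact hzC
      · rw [h]; exact hzi
  · left
    apply Finset.Subset.antisymm
    · intro g hg
      rcases hCsub g hg with h | h
      · simp [h]
      · exact absurd (h ▸ hg) hzi
    · intro g hg
      rw [Finset.mem_singleton] at hg
      rw [hg]; exact hzC
end

section
/- Let G be a torsion-free locally cyclic group (equivalently, a subgroup of (ℚ, +)). Then every Schur ring over G is either the group ring F[G] or the symmetric Schur ring F[G]^± whose classes are the pairs {g, g^{-1}}. -/
/-- Old Mathlib definition: no nontrivial element has finite order. -/
def Monoid.IsTorsionFree (G : Type*) [Monoid G] : Prop :=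
  ∀ g : G, g ≠ 1 → ¬IsOfFinOrder g

set_option linter.unusedSectionVars false
set_option maxHeartbeats 1000000

namespace SchurRing

open Finset

variable {F G : Type*} [Field F] [CommGroup G] [DecidableEq G]

section Basic

variable (S : SchurRing F G)

/-- The class of an element. -/
noncomputable def cls (g : G) : Finset G :=
  (S.existsUnique_mem g).exists.choose

lemma cls_mem (g : G) : S.cls g ∈ S.classes :=
  (S.existsUnique_mem g).exists.choose_spec.1

lemma mem_cls (g : G) : g ∈ S.cls g :=
  (S.existsUnique_mem g).exists.choose_spec.2

lemma cls_eq_of_mem {C : Finset G} {g : G} (hC : C ∈ S.classes) (hg : g ∈ C) :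
    C = S.cls g := by
  obtain ⟨D, _, huniq⟩ := S.existsUnique_mem g
  rw [huniq C ⟨hC, hg⟩, huniq (S.cls g) ⟨S.cls_mem g, S.mem_cls g⟩]

lemma cls_eq_cls_of_mem {g h : G} (hg : g ∈ S.cls h) : S.cls g = S.cls h :=
  (S.cls_eq_of_mem (S.cls_mem h) hg).symm

lemma cls_one : S.cls 1 = ({1} : Finset G) :=
  (S.cls_eq_of_mem S.one_mem (Finset.mem_singleton_self 1)).symm

lemma one_not_mem_cls {g : G} (hg : g ≠ 1) : (1 : G) ∉ S.cls g := by
  intro h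
  have h1 : S.cls 1 = S.cls g := S.cls_eq_cls_of_mem h
  have h2 := S.mem_cls g
  rw [← h1, S.cls_one, Finset.mem_singleton] at h2
  exact hg h2

/-- The inverse of a class is a class. -/
lemma inv_cls_mem {C : Finset G} (hC : C ∈ S.classes) :
    C.image (·⁻¹) ∈ S.classes := by
  obtain ⟨D, hD, hDC⟩ := S.inv_mem C hC
  have : C.image (·⁻¹) = D := by
    ext x
    simp only [Finset.mem_image, hDC]
    constructor
    · rintro ⟨y, hy, rfl⟩; simpa using hy
    · intro hx; exact ⟨x⁻¹, hx, inv_inv x⟩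
  rw [this]; exact hD

lemma cls_inv (g : G) : S.cls g⁻¹ = (S.cls g).image (·⁻¹) := by
  refine (S.cls_eq_of_mem (S.inv_cls_mem (S.cls_mem g)) ?_).symm
  exact Finset.mem_image_of_mem _ (S.mem_cls g)

end Basic

section Count

/-- Number of factorizations of `x` as a product `c * d`, `c ∈ C`, `d ∈ D`. -/
def cnt (C D : Finset G) (x : G) : ℕ :=
  #((C ×ˢ D).filter fun p => p.1 * p.2 = x)

/-- Number of factorizations of `x` as an `N`-fold product of elements of `D`. -/
def cntPow (D : Finset G) (N : ℕ) (x : G) : ℕ :=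
  #((Fintype.piFinset fun _ : Fin N => D).filter fun t => ∏ i, t i = x)

lemma sq_apply (C : Finset G) (x : G) :
    (simpleQuantity F C).coeff x = if x ∈ C then (1 : F) else 0 := by
  rw [simpleQuantity, MonoidAlgebra.coeff_sum, Finsupp.finset_sum_apply]
  simp only [MonoidAlgebra.coeff_single]
  rw [Finset.sum_congr rfl (fun d _ => Finsupp.single_apply (a := d) (a' := x) (b := (1:F)))]
  simp

lemma sq_mul_apply (C D : Finset G) (x : G) :
    (simpleQuantity F C * simpleQuantity F D).coeff x = (cnt C D x : F) := by
  have h : simpleQuantity F C * simpleQuantity F D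
      = ∑ p ∈ C ×ˢ D, MonoidAlgebra.single (p.1 * p.2) (1 : F) := by
    rw [simpleQuantity, simpleQuantity, Finset.sum_mul_sum, Finset.sum_product]
    exact Finset.sum_congr rfl fun c _ => Finset.sum_congr rfl fun d _ => by
      rw [MonoidAlgebra.single_mul_single, one_mul]
  rw [h, MonoidAlgebra.coeff_sum, Finsupp.finset_sum_apply]
  simp only [MonoidAlgebra.coeff_single]
  rw [Finset.sum_congr rfl
    (fun p _ => Finsupp.single_apply (a := p.1 * p.2) (a' := x) (b := (1:F)))]
  rw [Finset.sum_boole]; simp [cnt, cntPow]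

lemma sq_pow_apply (D : Finset G) (N : ℕ) (x : G) :
    ((simpleQuantity F D) ^ N).coeff x = (cntPow D N x : F) := by
  have h : (simpleQuantity F D) ^ N
      = ∑ t ∈ Fintype.piFinset (fun _ : Fin N => D),
          MonoidAlgebra.single (∏ i, t i) (1 : F) := by
    have h0 : (simpleQuantity F D) ^ N = ∏ _i : Fin N, simpleQuantity F D := by
      rw [Finset.prod_const, Finset.card_univ, Fintype.card_fin]
    rw [h0, simpleQuantity]
    rw [Finset.prod_univ_sum]
    refine Finset.sum_congr rfl fun t _ => ?_
    rw [MonoidAlgebra.prod_single]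
    congr 1
    exact Finset.prod_const_one
  rw [h, MonoidAlgebra.coeff_sum, Finsupp.finset_sum_apply]
  simp only [MonoidAlgebra.coeff_single]
  rw [Finset.sum_congr rfl
    (fun t _ => Finsupp.single_apply (a := ∏ i, t i) (a' := x) (b := (1:F)))]
  rw [Finset.sum_boole]; simp [cnt, cntPow]

end Count

section Span

variable (S : SchurRing F G)

/-- Elements of the Schur module have coefficients constant on classes. -/
lemma span_apply_eq {v : MonoidAlgebra F G}
    (hv : v ∈ Submodule.span F (simpleQuantity F '' S.classes))
    {C : Finset G} (hC : C ∈ S.classes) {g h : G} (hg : g ∈ C) (hh : h ∈ C) :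
    v.coeff g = v.coeff h := by
  induction hv using Submodule.span_induction with
  | mem w hw =>
    obtain ⟨D, hD, rfl⟩ := hw
    rw [sq_apply, sq_apply]
    have : g ∈ D ↔ h ∈ D := by
      constructor
      · intro hgD
        have h1 : D = S.cls g := S.cls_eq_of_mem hD hgD
        have h2 : C = S.cls g := S.cls_eq_of_mem hC hg
        rw [h1, ← h2]; exact hh
      · intro hhD
        have h1 : D = S.cls h := S.cls_eq_of_mem hD hhD
        have h2 : C = S.cls h := S.cls_eq_of_mem hC hh
        rw [h1, ← h2]; exact hg
    by_cases hD' : g ∈ D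
    · rw [if_pos hD', if_pos (this.mp hD')]
    · rw [if_neg hD', if_neg (fun hc => hD' (this.mpr hc))]
  | zero => simp
  | add u w _ _ hu hw => rw [MonoidAlgebra.coeff_add, Finsupp.add_apply, Finsupp.add_apply, hu, hw]
  | smul a u _ hu => rw [MonoidAlgebra.coeff_smul, Finsupp.smul_apply, Finsupp.smul_apply, hu]

lemma gen_mul_mem {C : Finset G} (hC : C ∈ S.classes) {v : MonoidAlgebra F G}
    (hv : v ∈ Submodule.span F (simpleQuantity F '' S.classes)) :
    simpleQuantity F C * v ∈ Submodule.span F (simpleQuantity F '' S.classes) := by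
  induction hv using Submodule.span_induction with
  | mem w hw =>
    obtain ⟨D, hD, rfl⟩ := hw
    exact S.mul_mem C hC D hD
  | zero => rw [mul_zero]; exact Submodule.zero_mem _
  | add u w _ _ hu hw => rw [mul_add]; exact Submodule.add_mem _ hu hw
  | smul a u _ hu => rw [mul_smul_comm]; exact Submodule.smul_mem _ a hu

lemma mul_mem_span {u v : MonoidAlgebra F G}
    (hu : u ∈ Submodule.span F (simpleQuantity F '' S.classes))
    (hv : v ∈ Submodule.span F (simpleQuantity F '' S.classes)) :
    u * v ∈ Submodule.span F (simpleQuantity F '' S.classes) := by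
  induction hu using Submodule.span_induction with
  | mem w hw =>
    obtain ⟨D, hD, rfl⟩ := hw
    exact S.gen_mul_mem hD hv
  | zero => rw [zero_mul]; exact Submodule.zero_mem _
  | add u w _ _ hu hw => rw [add_mul]; exact Submodule.add_mem _ hu hw
  | smul a u _ hu => rw [smul_mul_assoc]; exact Submodule.smul_mem _ a hu

lemma sq_mem {C : Finset G} (hC : C ∈ S.classes) :
    simpleQuantity F C ∈ Submodule.span F (simpleQuantity F '' S.classes) :=
  Submodule.subset_span ⟨C, hC, rfl⟩

lemma sq_pow_mem {C : Finset G} (hC : C ∈ S.classes) {N : ℕ} (hN : 1 ≤ N) :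
    (simpleQuantity F C) ^ N ∈ Submodule.span F (simpleQuantity F '' S.classes) := by
  induction N with
  | zero => omega
  | succ n ih =>
    rcases Nat.eq_or_lt_of_le hN with h1 | h1
    · rw [← h1, pow_one]; exact S.sq_mem hC
    · rw [pow_succ]
      exact S.mul_mem_span (ih (by omega)) (S.sq_mem hC)

end Span

section CountConst

variable [CharZero F] (S : SchurRing F G)

/-- The 2-fold counting function is constant on classes. -/
lemma cnt_const {C D : Finset G} (hC : C ∈ S.classes) (hD : D ∈ S.classes)
    {E : Finset G} (hE : E ∈ S.classes) {g h : G} (hg : g ∈ E) (hh : h ∈ E) :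
    cnt C D g = cnt C D h := by
  have h1 := S.span_apply_eq (S.mul_mem C hC D hD) hE hg hh
  rw [sq_mul_apply, sq_mul_apply] at h1
  exact_mod_cast h1

/-- The N-fold counting function is constant on classes. -/
lemma cntPow_const {D : Finset G} (hD : D ∈ S.classes) {N : ℕ} (hN : 1 ≤ N)
    {E : Finset G} (hE : E ∈ S.classes) {g h : G} (hg : g ∈ E) (hh : h ∈ E) :
    cntPow D N g = cntPow D N h := by
  have h1 := S.span_apply_eq (S.sq_pow_mem hD hN) hE hg hh
  rw [sq_pow_apply, sq_pow_apply] at h1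
  exact_mod_cast h1

end CountConst

end SchurRing


section EmbeddingRoot
variable {G : Type*} [CommGroup G]

section Embedding

variable (hTF : Monoid.IsTorsionFree G)
include hTF

lemma tf_zpow_inj {g : G} (hg : g ≠ 1) : Function.Injective (fun n : ℤ => g ^ n) :=
  injective_zpow_iff_not_isOfFinOrder.mpr (hTF g hg)

lemma tf_zpow_eq_one {g : G} {m : ℤ} (hm : m ≠ 0) (h : g ^ m = 1) : g = 1 := by
  by_contra hg
  have := tf_zpow_inj hTF hg (a₁ := m) (a₂ := 0) (by simpa using h)
  exact hm this

lemma tf_pow_eq_one {g : G} {m : ℕ} (hm : m ≠ 0) (h : g ^ m = 1) : g = 1 := by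
  refine tf_zpow_eq_one hTF (m := (m : ℤ)) (by exact_mod_cast hm) ?_
  rw [zpow_natCast, h]

variable (hLC : ∀ H : Subgroup G, H.FG → IsCyclic H)
include hLC

/-- Any two elements have a common "base". -/
lemma exists_common_base (a b : G) : ∃ (z : G) (p q : ℤ), a = z ^ p ∧ b = z ^ q := by
  set H := Subgroup.closure ({a, b} : Set G) with hH
  have hFG : H.FG := by
    rw [Subgroup.fg_iff]
    exact ⟨{a, b}, rfl, Set.toFinite _⟩
  have hcyc := hLC H hFG
  obtain ⟨z, hz⟩ := @IsCyclic.exists_generator H _ hcyc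
  have ha : a ∈ H := Subgroup.subset_closure (by simp)
  have hb : b ∈ H := Subgroup.subset_closure (by simp)
  obtain ⟨p, hp⟩ := hz ⟨a, ha⟩
  obtain ⟨q, hq⟩ := hz ⟨b, hb⟩
  refine ⟨(z : G), p, q, ?_, ?_⟩
  · have := congrArg (Subgroup.subtype H) hp
    simpa using this.symm
  · have := congrArg (Subgroup.subtype H) hq
    simpa using this.symm

/-- Key witness existence: relative to a fixed `g₀ ≠ 1`. -/
lemma exists_ratio {g₀ : G} (hg₀ : g₀ ≠ 1) (g : G) :
    ∃ p : ℤ × ℤ, p.2 ≠ 0 ∧ g ^ p.2 = g₀ ^ p.1 := by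
  obtain ⟨z, p, q, hp, hq⟩ := exists_common_base hTF hLC g₀ g
  -- g₀ = z^p, g = z^q
  have hp0 : p ≠ 0 := by
    rintro rfl
    simp at hp
    exact hg₀ hp
  refine ⟨(q, p), hp0, ?_⟩
  rw [hp, hq, ← zpow_mul, ← zpow_mul, mul_comm]

omit hLC in
lemma ratio_unique {g₀ : G} (hg₀ : g₀ ≠ 1) {g : G} {n m n' m' : ℤ}
    (hm : m ≠ 0) (hm' : m' ≠ 0) (h1 : g ^ m = g₀ ^ n) (h2 : g ^ m' = g₀ ^ n') :
    (n : ℚ) / m = (n' : ℚ) / m' := by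
  have key : g₀ ^ (n * m') = g₀ ^ (n' * m) := by
    rw [zpow_mul, ← h1, zpow_mul g₀ n' m, ← h2]
    rw [← zpow_mul, ← zpow_mul, mul_comm]
  have hnm : n * m' = n' * m := tf_zpow_inj hTF hg₀ key
  rw [div_eq_div_iff (by exact_mod_cast hm) (by exact_mod_cast hm')]
  exact_mod_cast hnm

/-- The embedding of a torsion-free locally cyclic group into `ℚ`. -/
lemma exists_embedding :
    ∃ f : G → ℚ, (∀ a b : G, f (a * b) = f a + f b) ∧ Function.Injective f := by
  by_cases htriv : ∀ g : G, g = 1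
  · refine ⟨fun _ => 0, fun _ _ => by ring, fun a b _ => by rw [htriv a, htriv b]⟩
  push_neg at htriv
  obtain ⟨g₀, hg₀⟩ := htriv
  have key := fun g => exists_ratio hTF hLC hg₀ g
  set f : G → ℚ := fun g => ((key g).choose.1 : ℚ) / ((key g).choose.2 : ℚ) with hf
  have hfspec : ∀ g : G, (key g).choose.2 ≠ 0 ∧ g ^ (key g).choose.2 = g₀ ^ (key g).choose.1 :=
    fun g => (key g).choose_spec
  have funiq : ∀ (g : G) (n m : ℤ), m ≠ 0 → g ^ m = g₀ ^ n → f g = (n : ℚ) / m := by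
    intro g n m hm h
    exact ratio_unique hTF hg₀ (hfspec g).1 hm (hfspec g).2 h
  have hone : f 1 = 0 := by
    have := funiq 1 0 1 one_ne_zero (by simp)
    simpa using this
  have hadd : ∀ a b : G, f (a * b) = f a + f b := by
    intro a b
    obtain ⟨hma, ha⟩ := hfspec a
    obtain ⟨hmb, hb⟩ := hfspec b
    set na := (key a).choose.1; set ma := (key a).choose.2
    set nb := (key b).choose.1; set mb := (key b).choose.2
    have hab : (a * b) ^ (ma * mb) = g₀ ^ (na * mb + nb * ma) := by
      rw [mul_zpow, zpow_add]
      congr 1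
      · rw [zpow_mul, ha, ← zpow_mul]
      · rw [mul_comm ma mb, zpow_mul, hb, ← zpow_mul]
    have hma' : (ma : ℚ) ≠ 0 := by exact_mod_cast hma
    have hmb' : (mb : ℚ) ≠ 0 := by exact_mod_cast hmb
    have h2 := funiq (a * b) _ _ (mul_ne_zero hma hmb) hab
    rw [h2]
    show _ = (na : ℚ) / (ma : ℚ) + (nb : ℚ) / (mb : ℚ)
    rw [div_add_div _ _ hma' hmb']
    push_cast
    ring
  refine ⟨f, hadd, ?_⟩
  have hinv : ∀ a : G, f a⁻¹ = - f a := by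
    intro a
    have := hadd a a⁻¹
    rw [mul_inv_cancel, hone] at this
    linarith
  intro a b hab
  have h0 : f (a * b⁻¹) = 0 := by rw [hadd, hinv, hab]; ring
  obtain ⟨hm, h⟩ := hfspec (a * b⁻¹)
  set n := (key (a * b⁻¹)).choose.1; set m := (key (a * b⁻¹)).choose.2
  have hn : (n : ℚ) / m = 0 := by rw [← funiq (a * b⁻¹) n m hm h]; exact h0
  have hn0 : n = 0 := by
    have hm' : (m : ℚ) ≠ 0 := by exact_mod_cast hm
    field_simp at hn
    simpa using hn
  rw [hn0] at h
  simp only [zpow_zero] at h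
  have hab1 : a * b⁻¹ = 1 := tf_zpow_eq_one hTF hm h
  exact mul_inv_eq_one.mp hab1

end Embedding
end EmbeddingRoot

namespace SchurRing

open Finset

variable {F G : Type*} [Field F] [CharZero F] [CommGroup G] [DecidableEq G]

section Translate

lemma cnt_singleton (C : Finset G) (σ y : G) :
    cnt C {σ} y = if y * σ⁻¹ ∈ C then 1 else 0 := by
  unfold cnt
  by_cases h : y * σ⁻¹ ∈ C
  · rw [if_pos h]
    have he : (C ×ˢ {σ}).filter (fun p => p.1 * p.2 = y) = {(y * σ⁻¹, σ)} := by
      ext p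
      simp only [Finset.mem_filter, Finset.mem_product, Finset.mem_singleton]
      constructor
      · rintro ⟨⟨h1, h2⟩, h3⟩
        have : p = (p.1, p.2) := rfl
        rw [Prod.ext_iff]
        constructor
        · simp only []
          rw [h2] at h3
          rw [← h3]
          simp [mul_assoc]
        · exact h2
      · rintro rfl
        refine ⟨⟨h, rfl⟩, ?_⟩
        simp
    rw [he, Finset.card_singleton]
  · rw [if_neg h]
    rw [Finset.card_eq_zero]
    ext p
    simp only [Finset.mem_filter, Finset.mem_product, Finset.mem_singleton,
      Finset.notMem_empty, iff_false, not_and]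
    rintro ⟨h1, rfl⟩ h3
    apply h
    rw [← h3]
    simpa [mul_assoc] using h1

variable (S : SchurRing F G)

lemma singleton_inv_mem {σ : G} (h : ({σ} : Finset G) ∈ S.classes) :
    ({σ⁻¹} : Finset G) ∈ S.classes := by
  have := S.inv_cls_mem h
  simpa using this

lemma cls_mul_singleton_subset {σ : G} (hσ : ({σ} : Finset G) ∈ S.classes) (x : G) :
    S.cls (x * σ) ⊆ (S.cls x).image (· * σ) := by
  intro y hy
  have h1 : cnt (S.cls x) {σ} y = cnt (S.cls x) {σ} (x * σ) :=
    S.cnt_const (S.cls_mem x) hσ (S.cls_mem (x * σ)) hy (S.mem_cls (x * σ))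
  rw [cnt_singleton, cnt_singleton] at h1
  have h2 : x * σ * σ⁻¹ ∈ S.cls x := by simpa [mul_assoc] using S.mem_cls x
  rw [if_pos h2] at h1
  have h3 : y * σ⁻¹ ∈ S.cls x := by
    by_contra hc
    rw [if_neg hc] at h1
    exact one_ne_zero h1.symm
  refine Finset.mem_image.mpr ⟨y * σ⁻¹, h3, by simp [mul_assoc]⟩

/-- Translation by a singleton class maps classes to classes. -/
lemma cls_mul_singleton {σ : G} (hσ : ({σ} : Finset G) ∈ S.classes) (x : G) :
    S.cls (x * σ) = (S.cls x).image (· * σ) := by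
  apply Finset.Subset.antisymm (S.cls_mul_singleton_subset hσ x)
  have h1 := S.cls_mul_singleton_subset (S.singleton_inv_mem hσ) (x * σ)
  have h2 : x * σ * σ⁻¹ = x := by simp [mul_assoc]
  rw [h2] at h1
  intro z hz
  obtain ⟨c, hc, rfl⟩ := Finset.mem_image.mp hz
  obtain ⟨w, hw, hwc⟩ := Finset.mem_image.mp (h1 hc)
  have : w = c * σ := by rw [← hwc]; simp [mul_assoc]
  rw [← this]; exact hw

/-- The trap: a singleton class cannot translate a class into itself. -/
lemma trap {f : G → ℚ} (hf : ∀ a b : G, f (a * b) = f a + f b)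
    (hfi : Function.Injective f) {σ : G} (hσ : ({σ} : Finset G) ∈ S.classes)
    (hσ1 : σ ≠ 1) {a : G} (ha : a * σ ∈ S.cls a) : False := by
  have h1 : S.cls (a * σ) = S.cls a := S.cls_eq_cls_of_mem ha
  have h2 : S.cls a = (S.cls a).image (· * σ) := by
    conv_lhs => rw [← h1]
    rw [S.cls_mul_singleton hσ a]
  have hinj : Set.InjOn (· * σ) (S.cls a) := fun u _ v _ h => by
    simpa using mul_right_cancel h
  have hsum : ∑ g ∈ (S.cls a).image (· * σ), f g = ∑ g ∈ S.cls a, f (g * σ) :=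
    Finset.sum_image (fun u hu v hv h => hinj hu hv h)
  have hsum2 : ∑ g ∈ S.cls a, f (g * σ) = (∑ g ∈ S.cls a, f g) + (S.cls a).card * f σ := by
    rw [Finset.sum_congr rfl (fun g _ => hf g σ), Finset.sum_add_distrib]
    simp [Finset.sum_const, nsmul_eq_mul]
  have hcard : 0 < (S.cls a).card := Finset.card_pos.mpr ⟨a, S.mem_cls a⟩
  have : (∑ g ∈ S.cls a, f g) = (∑ g ∈ S.cls a, f g) + (S.cls a).card * f σ := by
    conv_lhs => rw [h2]
    rw [hsum, hsum2]
  have hfσ : f σ = 0 := by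
    have hc : ((S.cls a).card : ℚ) ≠ 0 := by exact_mod_cast hcard.ne'
    have h3 : ((S.cls a).card : ℚ) * f σ = 0 := by linarith [this]
    exact (mul_eq_zero.mp h3).resolve_left hc
  have hf1 : f 1 = 0 := by
    have := hf 1 1
    simpa using this
  exact hσ1 (hfi (hfσ.trans hf1.symm))

end Translate

end SchurRing

namespace SchurRing

open Finset

variable {F G : Type*} [Field F] [CharZero F] [CommGroup G] [DecidableEq G]

section CountHelpers

lemma cnt_eq_sum (C D : Finset G) (x : G) :
    cnt C D x = ∑ c ∈ C, if c⁻¹ * x ∈ D then 1 else 0 := by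
  unfold cnt
  rw [Finset.card_filter, Finset.sum_product]
  refine Finset.sum_congr rfl fun c _ => ?_
  have h : ∀ d ∈ D, (if c * d = x then (1:ℕ) else 0) = if d = c⁻¹ * x then 1 else 0 := by
    intro d _
    refine if_congr ?_ rfl rfl
    rw [eq_inv_mul_iff_mul_eq]
  rw [Finset.sum_congr rfl h, Finset.sum_ite_eq' D (c⁻¹ * x) (fun _ => (1:ℕ))]

lemma cnt_pair {c₁ c₂ : G} (hc : c₁ ≠ c₂) (D : Finset G) (x : G) :
    cnt {c₁, c₂} D x = (if c₁⁻¹ * x ∈ D then 1 else 0) + (if c₂⁻¹ * x ∈ D then 1 else 0) := by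
  rw [cnt_eq_sum, Finset.sum_pair hc]

lemma cnt_ne_zero {C D : Finset G} {y : G} (h : cnt C D y ≠ 0) :
    ∃ c ∈ C, ∃ d ∈ D, c * d = y := by
  unfold cnt at h
  obtain ⟨p, hp⟩ := Finset.card_pos.mp (Nat.pos_of_ne_zero h)
  rw [Finset.mem_filter, Finset.mem_product] at hp
  exact ⟨p.1, hp.1.1, p.2, hp.1.2, hp.2⟩

lemma cntPow_ne_zero {D : Finset G} {N : ℕ} {y : G} (h : cntPow D N y ≠ 0) :
    ∃ t : Fin N → G, (∀ i, t i ∈ D) ∧ ∏ i, t i = y := by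
  unfold cntPow at h
  obtain ⟨t, ht⟩ := Finset.card_pos.mp (Nat.pos_of_ne_zero h)
  rw [Finset.mem_filter, Fintype.mem_piFinset] at ht
  exact ⟨t, ht.1, ht.2⟩

lemma choose_middle_ne_one {q t : ℕ} (h1 : 0 < t) (h2 : t < q) : q.choose t ≠ 1 := by
  have hq : q = (q - 1) + 1 := by omega
  have ht : t = (t - 1) + 1 := by omega
  rw [hq, ht, Nat.choose_succ_succ]
  have p1 : 0 < (q-1).choose (t-1) := Nat.choose_pos (by omega)
  have p2 : 0 < (q-1).choose (t-1+1) := Nat.choose_pos (by omega)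
  set A := (q-1).choose (t-1)
  set B := (q-1).choose (t-1+1)
  omega

end CountHelpers

end SchurRing

namespace SchurRing

open Finset

variable {F G : Type*} [Field F] [CharZero F] [CommGroup G] [DecidableEq G]

section PairPow

lemma prod_pair_tuple {a b w : G} (hw : a = b * w) {q : ℕ} {t : Fin q → G}
    (ht : ∀ i, t i ∈ ({a, b} : Finset G)) :
    ∏ i, t i = b ^ q * w ^ #(univ.filter fun i => t i = a) := by
  set T := univ.filter fun i => t i = a with hT
  have h1 : ∏ i, t i = (∏ i ∈ T, t i) * ∏ i ∈ Tᶜ, t i :=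
    (Finset.prod_mul_prod_compl T _).symm
  have h2 : ∏ i ∈ T, t i = a ^ #T := by
    rw [Finset.prod_congr rfl (fun i hi => (Finset.mem_filter.mp hi).2), Finset.prod_const]
  have h3 : ∏ i ∈ Tᶜ, t i = b ^ #(Tᶜ) := by
    rw [Finset.prod_congr rfl (fun i hi => ?_), Finset.prod_const]
    have hi' : ¬(t i = a) := by
      have := Finset.mem_compl.mp hi
      simpa [hT] using this
    have hmem := ht i
    rw [Finset.mem_insert, Finset.mem_singleton] at hmem
    tauto
  have hcard : #T + #(Tᶜ) = q := by
    rw [Finset.card_add_card_compl, Fintype.card_fin]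
  rw [h1, h2, h3, hw, mul_pow, mul_comm (b ^ #T) (w ^ #T), mul_assoc, ← pow_add, hcard,
    mul_comm]

lemma cntPow_pair {a b w : G} (hw : a = b * w) (hab : a ≠ b)
    (hwinj : ∀ s t : ℕ, w ^ s = w ^ t → s = t) (q s : ℕ) :
    cntPow {a, b} q (b ^ q * w ^ s) = q.choose s := by
  unfold cntPow
  have key : #((Fintype.piFinset fun _ : Fin q => ({a, b} : Finset G)).filter
      fun t => ∏ i, t i = b ^ q * w ^ s)
      = #(Finset.powersetCard s (univ : Finset (Fin q))) := by
    apply Finset.card_bij (fun t _ => Finset.univ.filter fun i => t i = a)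
    · intro t ht
      rw [Finset.mem_filter, Fintype.mem_piFinset] at ht
      rw [Finset.mem_powersetCard]
      refine ⟨Finset.subset_univ _, ?_⟩
      have hp := prod_pair_tuple hw (fun i => ht.1 i)
      rw [hp] at ht
      exact hwinj _ _ (mul_left_cancel ht.2)
    · intro t1 h1 t2 h2 heq
      rw [Finset.mem_filter, Fintype.mem_piFinset] at h1 h2
      funext i
      have m1 := h1.1 i
      have m2 := h2.1 i
      rw [Finset.mem_insert, Finset.mem_singleton] at m1 m2
      have hiff : t1 i = a ↔ t2 i = a := by
        constructor
        · intro h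
          have : i ∈ Finset.univ.filter fun j => t1 j = a := by
            rw [Finset.mem_filter]; exact ⟨Finset.mem_univ i, h⟩
          rw [heq, Finset.mem_filter] at this
          exact this.2
        · intro h
          have : i ∈ Finset.univ.filter fun j => t2 j = a := by
            rw [Finset.mem_filter]; exact ⟨Finset.mem_univ i, h⟩
          rw [← heq, Finset.mem_filter] at this
          exact this.2
      rcases m1 with h | h <;> rcases m2 with h' | h'
      · rw [h, h']
      · exact absurd (hiff.mp h) (by rw [h']; exact fun hc => hab hc.symm)
      · exact absurd (hiff.mpr h') (by rw [h]; exact fun hc => hab hc.symm)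
      · rw [h, h']
    · intro T hT
      rw [Finset.mem_powersetCard] at hT
      refine ⟨fun i => if i ∈ T then a else b, ?_, ?_⟩
      · rw [Finset.mem_filter, Fintype.mem_piFinset]
        have hmem : ∀ i, (if i ∈ T then a else b) ∈ ({a, b} : Finset G) := by
          intro i
          by_cases h : i ∈ T <;> simp [h]
        refine ⟨hmem, ?_⟩
        have hfil : (Finset.univ.filter fun i => (if i ∈ T then a else b) = a) = T := by
          ext i
          rw [Finset.mem_filter]
          by_cases h : i ∈ T
          · simp [h]
          · simp [h]
            exact fun hc => hab hc.symm
        rw [prod_pair_tuple hw hmem, hfil, hT.2]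
      · ext i
        rw [Finset.mem_filter]
        by_cases h : i ∈ T
        · simp [h]
        · simp [h]
          exact fun hc => hab hc.symm
  rw [key, Finset.card_powersetCard, Finset.card_univ, Fintype.card_fin]

lemma cntPow_pair_ne_zero {a b w : G} (hw : a = b * w) {q : ℕ} {x : G}
    (h : cntPow {a, b} q x ≠ 0) : ∃ s ≤ q, x = b ^ q * w ^ s := by
  obtain ⟨t, ht, hprod⟩ := cntPow_ne_zero h
  refine ⟨#(univ.filter fun i => t i = a), ?_, ?_⟩
  · exact le_trans (Finset.card_filter_le _ _) (by rw [Finset.card_univ, Fintype.card_fin])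
  · rw [← hprod, prod_pair_tuple hw ht]

end PairPow

end SchurRing

namespace SchurRing

open Finset

variable {F G : Type*} [Field F] [CharZero F] [CommGroup G] [DecidableEq G]

section R2

variable (S : SchurRing F G)

/-- Membership in an explicit pair of powers. -/
lemma mem_pair_pow {w : G} (hw : Function.Injective (fun n : ℤ => w ^ n))
    (i j l : ℤ) : w ^ i ∈ ({w ^ j, w ^ l} : Finset G) ↔ (i = j ∨ i = l) := by
  rw [Finset.mem_insert, Finset.mem_singleton]
  constructor
  · rintro (h | h)
    · exact Or.inl (hw h)
    · exact Or.inr (hw h)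
  · rintro (rfl | rfl) <;> simp

/-- The `W_k` machinery: classes of powers of `w` are symmetric pairs. -/
lemma cls_wpow (hTF : Monoid.IsTorsionFree G)
    {f : G → ℚ} (hf : ∀ a b : G, f (a * b) = f a + f b) (hfi : Function.Injective f)
    {w : G} (hw1 : w ≠ 1) (hW1 : S.cls w = {w, w⁻¹}) :
    ∀ k : ℕ, 1 ≤ k → S.cls (w ^ (k : ℤ)) = {w ^ (k : ℤ), w ^ (-(k : ℤ))} := by
  have hz : Function.Injective (fun n : ℤ => w ^ n) := tf_zpow_inj hTF hw1
  have hzn : ∀ i j : ℤ, i ≠ j → w ^ i ≠ w ^ j := fun i j hij he => hij (hz he)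
  have hW1' : S.cls (w ^ (1:ℤ)) = {w ^ (1:ℤ), w ^ (-1:ℤ)} := by
    rw [zpow_one, zpow_neg, zpow_one]; exact hW1
  -- the counting function against W₁ and a pair {w^j, w^{-j}}
  have key : ∀ i j : ℤ, cnt ({w ^ (1:ℤ), w ^ (-1:ℤ)}) ({w ^ j, w ^ (-j)}) (w ^ i)
      = (if i - 1 = j ∨ i - 1 = -j then 1 else 0)
        + (if i + 1 = j ∨ i + 1 = -j then 1 else 0) := by
    intro i j
    rw [cnt_pair (hzn 1 (-1) (by omega))]
    have e1 : (w ^ (1:ℤ))⁻¹ * w ^ i = w ^ (i - 1) := by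
      rw [← zpow_neg, ← zpow_add]; ring_nf
    have e2 : (w ^ (-1:ℤ))⁻¹ * w ^ i = w ^ (i + 1) := by
      rw [← zpow_neg, ← zpow_add]; ring_nf
    rw [e1, e2]
    simp only [mem_pair_pow hz]
  -- main strong induction
  intro k
  induction k using Nat.strong_induction_on with
  | _ k IH =>
    intro hk
    rcases Nat.eq_or_lt_of_le hk with h1 | h2
    · rw [← h1]; push_cast; exact hW1'
    -- k ≥ 2; set K := k - 1 ≥ 1 with cls (w^K) known
    have hK1 : 1 ≤ k - 1 := by omega
    have hKk : k - 1 < k := by omega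
    have WK := IH (k - 1) hKk hK1
    have hcast : ((k - 1 : ℕ) : ℤ) = (k : ℤ) - 1 := by push_cast [Nat.cast_sub (by omega : 1 ≤ k)]; ring
    rw [hcast] at WK
    -- the pair {w^(k-1), w^(1-k)} is a class, as is W₁
    have hWKcls : ({w ^ ((k:ℤ) - 1), w ^ (-((k:ℤ) - 1))} : Finset G) ∈ S.classes := by
      rw [← WK]; exact S.cls_mem _
    have hW1cls : ({w ^ (1:ℤ), w ^ (-1:ℤ)} : Finset G) ∈ S.classes := by
      rw [← hW1']; exact S.cls_mem _
    -- count of w^k in W₁ * W_{k-1} is 1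
    have hcnt_k : cnt ({w ^ (1:ℤ), w ^ (-1:ℤ)}) ({w ^ ((k:ℤ) - 1), w ^ (-((k:ℤ)-1))}) (w ^ (k:ℤ)) = 1 := by
      rw [key (k:ℤ) ((k:ℤ) - 1)]
      have c1 : ((k:ℤ) - 1 = (k:ℤ) - 1 ∨ (k:ℤ) - 1 = -((k:ℤ)-1)) := Or.inl rfl
      have c2 : ¬((k:ℤ) + 1 = (k:ℤ) - 1 ∨ (k:ℤ) + 1 = -((k:ℤ)-1)) := by omega
      rw [if_pos c1, if_neg c2]
    -- any element of cls (w^k) has count 1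
    have hsub : ∀ y ∈ S.cls (w ^ (k:ℤ)),
        cnt ({w ^ (1:ℤ), w ^ (-1:ℤ)}) ({w ^ ((k:ℤ) - 1), w ^ (-((k:ℤ)-1))}) y = 1 := by
      intro y hy
      rw [S.cnt_const hW1cls hWKcls (S.cls_mem (w ^ (k:ℤ))) hy (S.mem_cls _)]
      exact hcnt_k
    -- elements of cls (w^k) are powers w^e with e ∈ {k, 2-k, k-2, -k}
    have hform : ∀ y ∈ S.cls (w ^ (k:ℤ)),
        y = w ^ (k:ℤ) ∨ y = w ^ (2 - (k:ℤ)) ∨ y = w ^ ((k:ℤ) - 2) ∨ y = w ^ (-(k:ℤ)) := by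
      intro y hy
      have h0 : cnt ({w ^ (1:ℤ), w ^ (-1:ℤ)}) ({w ^ ((k:ℤ) - 1), w ^ (-((k:ℤ)-1))}) y ≠ 0 := by
        rw [hsub y hy]; omega
      obtain ⟨c, hc, d, hd, hcd⟩ := cnt_ne_zero h0
      rw [Finset.mem_insert, Finset.mem_singleton] at hc hd
      rcases hc with rfl | rfl <;> rcases hd with rfl | rfl <;>
        rw [← hcd, ← zpow_add]
      · left; congr 1; ring
      · right; left; congr 1; ring
      · right; right; left; congr 1; ring
      · right; right; right; congr 1; ring
    -- exclude the middle powers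
    have hmid : ∀ y ∈ S.cls (w ^ (k:ℤ)), y ≠ w ^ (2 - (k:ℤ)) ∧ y ≠ w ^ ((k:ℤ) - 2) := by
      rcases Nat.eq_or_lt_of_le h2 with hk2 | hk3
      · -- k = 2 : middle powers are w^0 = 1
        intro y hy
        have hwk1 : w ^ (k:ℤ) ≠ 1 := fun hc =>
          hw1 (tf_zpow_eq_one hTF (by omega : (k:ℤ) ≠ 0) hc)
        have h1n : (1:G) ∉ S.cls (w ^ (k:ℤ)) := S.one_not_mem_cls hwk1
        constructor <;> rintro rfl
        · apply h1n
          have hz0 : (2 - (k:ℤ)) = 0 := by omega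
          rw [hz0, zpow_zero] at hy
          exact hy
        · apply h1n
          have hz0 : ((k:ℤ) - 2) = 0 := by omega
          rw [hz0, zpow_zero] at hy
          exact hy
      · -- k ≥ 3 : middle powers lie in the class W_{k-2}
        have hK2 : 1 ≤ k - 2 := by omega
        have WK2 := IH (k-2) (by omega) hK2
        have hcast2 : ((k - 2 : ℕ) : ℤ) = (k : ℤ) - 2 := by
          push_cast [Nat.cast_sub (by omega : 2 ≤ k)]; ring
        rw [hcast2] at WK2
        intro y hy
        constructor
        · rintro rfl
          have hmem : w ^ (2 - (k:ℤ)) ∈ ({w ^ ((k:ℤ)-2), w ^ (-((k:ℤ)-2))} : Finset G) := by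
            rw [mem_pair_pow hz]; right; omega
          have e5 : S.cls (w ^ (2 - (k:ℤ))) = S.cls (w ^ ((k:ℤ)-2)) :=
            S.cls_eq_cls_of_mem (by rw [WK2]; exact hmem)
          have e6 : S.cls (w ^ (2 - (k:ℤ))) = S.cls (w ^ (k:ℤ)) :=
            S.cls_eq_cls_of_mem hy
          have h4 : w ^ (k:ℤ) ∈ ({w ^ ((k:ℤ)-2), w ^ (-((k:ℤ)-2))} : Finset G) := by
            rw [← WK2, ← e5, e6]
            exact S.mem_cls _
          rw [mem_pair_pow hz] at h4
          omega
        · rintro rfl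
          have e6 : S.cls (w ^ ((k:ℤ)-2)) = S.cls (w ^ (k:ℤ)) :=
            S.cls_eq_cls_of_mem hy
          have h4 : w ^ (k:ℤ) ∈ ({w ^ ((k:ℤ)-2), w ^ (-((k:ℤ)-2))} : Finset G) := by
            rw [← WK2, e6]
            exact S.mem_cls _
          rw [mem_pair_pow hz] at h4
          omega
    -- so cls (w^k) ⊆ {w^k, w^{-k}}
    have hsub2 : S.cls (w ^ (k:ℤ)) ⊆ {w ^ (k:ℤ), w ^ (-(k:ℤ))} := by
      intro y hy
      rcases hform y hy with h | h | h | h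
      · rw [h]; exact Finset.mem_insert_self _ _
      · exact absurd h (hmid y hy).1
      · exact absurd h (hmid y hy).2
      · rw [h]; exact Finset.mem_insert_of_mem (Finset.mem_singleton_self _)
    -- exclude the singleton case
    have hnotsing : S.cls (w ^ (k:ℤ)) ≠ {w ^ (k:ℤ)} := by
      intro hs
      -- translation of W₁ by σ := w^k
      have hσcls : ({w ^ (k:ℤ)} : Finset G) ∈ S.classes := by
        rw [← hs]; exact S.cls_mem _
      have htr := S.cls_mul_singleton hσcls w
      have h5 : w * w ^ (k:ℤ) = w ^ ((k:ℤ) + 1) := by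
        rw [zpow_add, zpow_one, mul_comm]
      have h6 : (S.cls w).image (· * w ^ (k:ℤ)) = {w ^ ((k:ℤ)+1), w ^ ((k:ℤ)-1)} := by
        rw [hW1, Finset.image_insert, Finset.image_singleton]
        have e3 : w * w ^ (k:ℤ) = w ^ ((k:ℤ)+1) := by rw [zpow_add_one, mul_comm]
        have e4 : w⁻¹ * w ^ (k:ℤ) = w ^ ((k:ℤ)-1) := by rw [zpow_sub_one, mul_comm]
        rw [e3, e4]
      rw [h5, h6] at htr
      -- w^{k-1} belongs to this class, which must then equal W_{k-1}
      have h7 : w ^ ((k:ℤ) - 1) ∈ S.cls (w ^ ((k:ℤ)+1)) := by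
        rw [htr]; exact Finset.mem_insert_of_mem (Finset.mem_singleton_self _)
      have h8 : S.cls (w ^ ((k:ℤ)-1)) = S.cls (w ^ ((k:ℤ)+1)) := S.cls_eq_cls_of_mem h7
      rw [WK, htr] at h8
      have h9 : w ^ (-((k:ℤ)-1)) ∈ ({w ^ ((k:ℤ)+1), w ^ ((k:ℤ)-1)} : Finset G) := by
        rw [← h8]; exact Finset.mem_insert_of_mem (Finset.mem_singleton_self _)
      rw [mem_pair_pow hz] at h9
      omega
    -- conclude
    have hin : w ^ (-(k:ℤ)) ∈ S.cls (w ^ (k:ℤ)) := by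
      by_contra hc
      apply hnotsing
      ext y
      rw [Finset.mem_singleton]
      constructor
      · intro hy
        have := hsub2 hy
        rw [Finset.mem_insert, Finset.mem_singleton] at this
        rcases this with h | h
        · exact h
        · rw [h] at hy; exact absurd hy hc
      · rintro rfl; exact S.mem_cls _
    apply Finset.Subset.antisymm hsub2
    intro y hy
    rw [Finset.mem_insert, Finset.mem_singleton] at hy
    rcases hy with rfl | rfl
    · exact S.mem_cls _
    · exact hin

/-- Every two-element class is a symmetric pair. -/
lemma pair_symmetric (hTF : Monoid.IsTorsionFree G)
    (hLC : ∀ H : Subgroup G, H.FG → IsCyclic H)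
    {f : G → ℚ} (hf : ∀ a b : G, f (a * b) = f a + f b) (hfi : Function.Injective f)
    {a b : G} (hcls : S.cls a = {a, b}) (hab : a ≠ b) : b = a⁻¹ := by
  have hbmem : b ∈ S.cls a := by
    rw [hcls]; exact Finset.mem_insert_of_mem (Finset.mem_singleton_self b)
  have ha1 : a ≠ 1 := by
    rintro rfl
    have hb : b ∈ ({1} : Finset G) := by
      rw [← S.cls_one, hcls]
      exact Finset.mem_insert_of_mem (Finset.mem_singleton_self b)
    exact hab (Finset.mem_singleton.mp hb).symm
  have hb1 : b ≠ 1 := by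
    rintro rfl
    exact S.one_not_mem_cls ha1 hbmem
  set w := a * b⁻¹ with hwdef
  have hw1 : w ≠ 1 := by
    rw [hwdef, Ne, mul_inv_eq_one]
    exact hab
  have hwa : a = b * w := by rw [hwdef, mul_comm b, inv_mul_cancel_right]
  have hz : Function.Injective (fun n : ℤ => w ^ n) := tf_zpow_inj hTF hw1
  have hD : ({a, b} : Finset G) ∈ S.classes := by rw [← hcls]; exact S.cls_mem a
  have hDs : ({a⁻¹, b⁻¹} : Finset G) ∈ S.classes := by
    have h1 := S.inv_cls_mem hD
    have himg : ({a, b} : Finset G).image (·⁻¹) = {a⁻¹, b⁻¹} := by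
      rw [Finset.image_insert, Finset.image_singleton]
    rwa [himg] at h1
  have hcntw : cnt ({a, b}) ({a⁻¹, b⁻¹}) w = 1 := by
    rw [cnt_pair hab]
    have m1 : a⁻¹ * w ∈ ({a⁻¹, b⁻¹} : Finset G) := by
      have h1 : a⁻¹ * w = b⁻¹ := by rw [hwdef]; exact inv_mul_cancel_left a b⁻¹
      rw [h1]; exact Finset.mem_insert_of_mem (Finset.mem_singleton_self _)
    have m2 : b⁻¹ * w ∉ ({a⁻¹, b⁻¹} : Finset G) := by
      intro hm
      rw [Finset.mem_insert, Finset.mem_singleton] at hm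
      rcases hm with hm | hm
      · apply hw1
        refine tf_pow_eq_one hTF (two_ne_zero) ?_
        rw [hwdef] at hm ⊢
        rw [pow_two]
        calc a * b⁻¹ * (a * b⁻¹) = a * (b⁻¹ * (a * b⁻¹)) := by rw [mul_assoc]
        _ = a * a⁻¹ := by rw [hm]
        _ = 1 := mul_inv_cancel a
      · apply hw1
        have h1 : b⁻¹ * w = b⁻¹ * 1 := by rw [hm, mul_one]
        exact mul_left_cancel h1
    rw [if_pos m1, if_neg m2]
  have hsubw : S.cls w ⊆ {w, w⁻¹} := by
    intro y hy
    have hcy : cnt ({a, b}) ({a⁻¹, b⁻¹}) y = 1 := by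
      rw [S.cnt_const hD hDs (S.cls_mem w) hy (S.mem_cls w)]
      exact hcntw
    have hyne1 : y ≠ 1 := by
      rintro rfl
      rw [cnt_pair hab] at hcy
      have m1 : a⁻¹ * 1 ∈ ({a⁻¹, b⁻¹} : Finset G) := by simp
      have m2 : b⁻¹ * 1 ∈ ({a⁻¹, b⁻¹} : Finset G) := by simp
      rw [if_pos m1, if_pos m2] at hcy
      omega
    obtain ⟨c, hc, d, hd, hcd⟩ := cnt_ne_zero (by rw [hcy]; omega :
      cnt ({a, b}) ({a⁻¹, b⁻¹}) y ≠ 0)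
    rw [Finset.mem_insert, Finset.mem_singleton] at hc hd
    rcases hc with hc' | hc' <;> rcases hd with hd' | hd' <;> rw [hc', hd'] at hcd
    · exfalso; apply hyne1; rw [← hcd]; exact mul_inv_cancel a
    · rw [← hcd, ← hwdef]; exact Finset.mem_insert_self _ _
    · have h1 : b * a⁻¹ = w⁻¹ := by rw [hwdef, mul_inv_rev, inv_inv]
      rw [← hcd, h1]
      exact Finset.mem_insert_of_mem (Finset.mem_singleton_self _)
    · exfalso; apply hyne1; rw [← hcd]; exact mul_inv_cancel b
  have hW1 : S.cls w = {w, w⁻¹} := by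
    have hmemw : w ∈ S.cls w := S.mem_cls w
    by_cases hc : w⁻¹ ∈ S.cls w
    · apply Finset.Subset.antisymm hsubw
      intro y hy
      rw [Finset.mem_insert, Finset.mem_singleton] at hy
      rcases hy with rfl | rfl
      exacts [hmemw, hc]
    · exfalso
      have hsing : S.cls w = {w} := by
        ext y
        rw [Finset.mem_singleton]
        constructor
        · intro hy
          rcases Finset.mem_insert.mp (hsubw hy) with h | h
          · exact h
          · rw [Finset.mem_singleton] at h
            rw [h] at hy
            exact absurd hy hc
        · rintro rfl; exact hmemw
      have hσ : ({w} : Finset G) ∈ S.classes := by rw [← hsing]; exact S.cls_mem w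
      refine S.trap hf hfi hσ hw1 (a := b) ?_
      have hba : b * w = a := hwa.symm
      have hclsb : S.cls b = S.cls a := S.cls_eq_cls_of_mem hbmem
      rw [hba, hclsb]
      exact S.mem_cls a
  have hWk := S.cls_wpow hTF hf hfi hw1 hW1
  obtain ⟨z, pz, qz, hbz, hwz⟩ := exists_common_base hTF hLC b w
  have hqz0 : qz ≠ 0 := by
    rintro rfl
    rw [zpow_zero] at hwz
    exact hw1 hwz
  obtain ⟨z', p', q', hbz', hwz', hq'⟩ :
      ∃ (z' : G) (p' q' : ℤ), b = z' ^ p' ∧ w = z' ^ q' ∧ 1 ≤ q' := by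
    rcases lt_or_gt_of_ne hqz0 with h | h
    · refine ⟨z⁻¹, -pz, -qz, ?_, ?_, by omega⟩
      · rw [hbz, inv_zpow, zpow_neg, inv_inv]
      · rw [hwz, inv_zpow, zpow_neg, inv_inv]
    · exact ⟨z, pz, qz, hbz, hwz, by omega⟩
  have hp0 : p' ≠ 0 := by
    rintro rfl
    rw [zpow_zero] at hbz'
    exact hb1 hbz'
  set q : ℕ := q'.toNat with hqdef
  have hq1 : 1 ≤ q := by omega
  have hqcast : (q : ℤ) = q' := Int.toNat_of_nonneg (by omega)
  have hbq : b ^ q = w ^ p' := by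
    rw [hbz', hwz', ← zpow_natCast (z' ^ p') q, ← zpow_mul, ← zpow_mul, hqcast, mul_comm]
  have hWz : ∀ p : ℤ, p ≠ 0 → S.cls (w ^ p) = {w ^ p, w ^ (-p)} := by
    intro p hp
    rcases lt_or_gt_of_ne hp with hneg | hpos
    · have h1 := hWk (-p).toNat (by omega)
      have hcn : (((-p).toNat : ℕ) : ℤ) = -p := Int.toNat_of_nonneg (by omega)
      rw [hcn] at h1
      have h2 : w ^ p = (w ^ (-p))⁻¹ := by rw [← zpow_neg, neg_neg]
      rw [h2, S.cls_inv, h1, Finset.image_insert, Finset.image_singleton, ← zpow_neg,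
        ← zpow_neg, neg_neg]
    · have h1 := hWk p.toNat (by omega)
      have hcn : ((p.toNat : ℕ) : ℤ) = p := Int.toNat_of_nonneg (by omega)
      rw [hcn] at h1
      exact h1
  have hcbq : S.cls (b ^ q) = {w ^ p', w ^ (-p')} := by rw [hbq]; exact hWz p' hp0
  have hinv_mem : (b ^ q)⁻¹ ∈ S.cls (b ^ q) := by
    rw [hcbq]
    have h1 : (b ^ q)⁻¹ = w ^ (-p') := by rw [hbq, ← zpow_neg]
    rw [h1]
    exact Finset.mem_insert_of_mem (Finset.mem_singleton_self _)
  have hwinj : ∀ s t : ℕ, w ^ s = w ^ t → s = t := by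
    intro s t h
    rw [← zpow_natCast w s, ← zpow_natCast w t] at h
    exact_mod_cast hz h
  have hc1 : cntPow {a, b} q (b ^ q) = 1 := by
    have h1 := cntPow_pair hwa hab hwinj q 0
    rwa [pow_zero, mul_one, Nat.choose_zero_right] at h1
  have hc2 : cntPow {a, b} q ((b ^ q)⁻¹) = 1 := by
    rw [S.cntPow_const hD hq1 (S.cls_mem (b ^ q)) hinv_mem (S.mem_cls (b ^ q))]
    exact hc1
  obtain ⟨s, hsle, hs⟩ := cntPow_pair_ne_zero hwa (by rw [hc2]; omega :
    cntPow {a, b} q ((b ^ q)⁻¹) ≠ 0)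
  have hval : cntPow {a, b} q ((b ^ q)⁻¹) = q.choose s := by
    rw [hs]; exact cntPow_pair hwa hab hwinj q s
  have hchoose1 : q.choose s = 1 := by rw [← hval, hc2]
  have hs0q : s = 0 ∨ s = q := by
    by_contra hcon
    push_neg at hcon
    exact choose_middle_ne_one (by omega) (by omega) hchoose1
  rcases hs0q with rfl | rfl
  · exfalso
    rw [pow_zero, mul_one] at hs
    have h2q : b ^ (2 * q) = 1 := by
      rw [two_mul, pow_add]
      nth_rewrite 1 [← hs]
      exact inv_mul_cancel _
    exact hb1 (tf_pow_eq_one hTF (by omega) h2q)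
  · have habq : (a * b) ^ q = 1 := by
      rw [mul_pow, hwa, mul_pow]
      calc b ^ q * w ^ q * b ^ q = b ^ q * w ^ q * ((b ^ q)⁻¹)⁻¹ := by rw [inv_inv]
      _ = b ^ q * w ^ q * (b ^ q * w ^ q)⁻¹ := by rw [hs]
      _ = 1 := mul_inv_cancel _
    have hab1 : a * b = 1 := tf_pow_eq_one hTF (by omega) habq
    exact (inv_eq_of_mul_eq_one_right hab1).symm

end R2

end SchurRing

namespace SchurRing

open Finset

variable {F G : Type*} [Field F] [CharZero F] [CommGroup G] [DecidableEq G]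

section FHelpers

variable {f : G → ℚ} (hf : ∀ a b : G, f (a * b) = f a + f b)
include hf

lemma f_one : f 1 = 0 := by
  have := hf 1 1
  simp at this
  linarith

lemma f_inv (x : G) : f x⁻¹ = - f x := by
  have := hf x x⁻¹
  rw [mul_inv_cancel, f_one hf] at this
  linarith

lemma f_pow (x : G) (n : ℕ) : f (x ^ n) = n * f x := by
  induction n with
  | zero => simp [f_one hf]
  | succ k ih => rw [pow_succ, hf, ih]; push_cast; ring

lemma f_prod {ι : Type*} (s : Finset ι) (t : ι → G) :
    f (∏ i ∈ s, t i) = ∑ i ∈ s, f (t i) := by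
  induction s using Finset.cons_induction_on with
  | empty => simp [f_one hf]
  | cons _ _ ha ih => rw [Finset.prod_cons, Finset.sum_cons, hf, ih]

end FHelpers

section NFold

variable {f : G → ℚ} (hf : ∀ a b : G, f (a * b) = f a + f b)
  (hfi : Function.Injective f)
include hf hfi

/-- The strict maximum has a unique `N`-fold factorization. -/
lemma cntPow_max_eq_one {D : Finset G} {a : G} (ha : a ∈ D)
    (hmax : ∀ x ∈ D, f x ≤ f a) (N : ℕ) :
    cntPow D N (a ^ N) = 1 := by
  unfold cntPow
  rw [Finset.card_eq_one]
  refine ⟨fun _ => a, ?_⟩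
  ext t
  rw [Finset.mem_filter, Fintype.mem_piFinset, Finset.mem_singleton]
  constructor
  · rintro ⟨htD, htp⟩
    funext i
    by_contra hne
    have hlt : f (t i) < f a := by
      rcases lt_or_eq_of_le (hmax (t i) (htD i)) with h | h
      · exact h
      · exact absurd (hfi h) hne
    have hsum : ∑ j : Fin N, f (t j) = N * f a := by
      rw [← f_prod hf, htp, f_pow hf]
    have hlt2 : ∑ j : Fin N, f (t j) < ∑ _j : Fin N, f a := by
      apply Finset.sum_lt_sum (fun j _ => hmax (t j) (htD j))
      exact ⟨i, Finset.mem_univ i, hlt⟩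
    rw [hsum] at hlt2
    simp [Finset.sum_const, Finset.card_univ] at hlt2
  · rintro rfl
    refine ⟨fun _ => ha, ?_⟩
    rw [Finset.prod_const, Finset.card_univ, Fintype.card_fin]

/-- A unique `N`-fold factorization must be by a constant tuple. -/
lemma cntPow_eq_one_constant {D : Finset G} {N : ℕ} (hN : 1 ≤ N) {y : G}
    (h : cntPow D N y = 1) : ∃ d ∈ D, y = d ^ N := by
  have hne : cntPow D N y ≠ 0 := by omega
  obtain ⟨t, htD, htp⟩ := cntPow_ne_zero hne
  by_cases hconst : ∀ i j : Fin N, t i = t j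
  · have h0 : (0 : ℕ) < N := hN
    refine ⟨t ⟨0, h0⟩, htD _, ?_⟩
    rw [← htp]
    rw [Finset.prod_congr rfl (fun i _ => hconst i ⟨0, h0⟩), Finset.prod_const,
      Finset.card_univ, Fintype.card_fin]
  · push_neg at hconst
    obtain ⟨i, j, hij⟩ := hconst
    exfalso
    -- the swapped tuple is a distinct factorization
    have h2 : 2 ≤ cntPow D N y := by
      unfold cntPow
      refine Finset.one_lt_card.mpr ⟨t, ?_, t ∘ Equiv.swap i j, ?_, ?_⟩
      · rw [Finset.mem_filter, Fintype.mem_piFinset]; exact ⟨htD, htp⟩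
      · rw [Finset.mem_filter, Fintype.mem_piFinset]
        refine ⟨fun l => htD _, ?_⟩
        have : ∏ l : Fin N, (t ∘ (Equiv.swap i j)) l = ∏ l : Fin N, t ((Equiv.swap i j) l) :=
          Finset.prod_congr rfl (fun l _ => rfl)
        rw [this, Equiv.prod_comp (Equiv.swap i j) t]
        exact htp
      · intro hc
        have := congrFun hc i
        simp only [Function.comp_apply, Equiv.swap_apply_left] at this
        exact hij this
    omega

end NFold

end SchurRing

namespace SchurRing

open Finset

variable {F G : Type*} [Field F] [CharZero F] [CommGroup G] [DecidableEq G]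

section Middle

variable {f : G → ℚ} (hf : ∀ a b : G, f (a * b) = f a + f b)
  (hfi : Function.Injective f)
include hf hfi

/-- Middle elements have at least two `N`-fold factorizations for all large `N`. -/
lemma cntPow_middle_ge_two {D : Finset G} {a c d : G}
    (ha : a ∈ D) (hc : c ∈ D) (hd : d ∈ D)
    (hcd : f c < f d) (hda : f d < f a) :
    ∃ m : ℕ, 1 ≤ m ∧ ∀ N, m ≤ N → 2 ≤ cntPow D N (d ^ N) := by
  obtain ⟨α, β, hα, hβ, hrel⟩ : ∃ α β : ℕ, 1 ≤ α ∧ 1 ≤ β ∧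
      (α : ℚ) * (f d - f c) = (β : ℚ) * (f a - f d) := by
    have hq₁0 : 0 < f d - f c := by linarith
    have hq₂0 : 0 < f a - f d := by linarith
    have hn₁ : 0 < (f d - f c).num := Rat.num_pos.mpr hq₁0
    have hn₂ : 0 < (f a - f d).num := Rat.num_pos.mpr hq₂0
    have key : ∀ q : ℚ, (q.den : ℚ) * q = q.num := by
      intro q
      have h := Rat.num_div_den q
      have hd : (q.den : ℚ) ≠ 0 := Nat.cast_ne_zero.mpr q.den_pos.ne'
      calc (q.den : ℚ) * q = (q.den : ℚ) * ((q.num : ℚ) / (q.den : ℚ)) := by rw [h]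
      _ = q.num := by rw [mul_comm]; exact div_mul_cancel₀ _ hd
    refine ⟨(f a - f d).num.toNat * (f d - f c).den, (f d - f c).num.toNat * (f a - f d).den,
      ?_, ?_, ?_⟩
    · exact Nat.one_le_iff_ne_zero.mpr (Nat.mul_ne_zero (by omega) (f d - f c).den_pos.ne')
    · exact Nat.one_le_iff_ne_zero.mpr (Nat.mul_ne_zero (by omega) (f a - f d).den_pos.ne')
    · have c1 : (((f a - f d).num.toNat : ℕ) : ℚ) = ((f a - f d).num : ℚ) := by
        exact_mod_cast Int.toNat_of_nonneg hn₂.le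
      have c2 : (((f d - f c).num.toNat : ℕ) : ℚ) = ((f d - f c).num : ℚ) := by
        exact_mod_cast Int.toNat_of_nonneg hn₁.le
      push_cast
      rw [c1, c2, mul_assoc, mul_assoc, key (f d - f c), key (f a - f d)]
      ring
  have hgrp : c ^ α * a ^ β = d ^ (α + β) := by
    apply hfi
    rw [hf, f_pow hf, f_pow hf, f_pow hf]
    push_cast
    linarith [hrel]
  refine ⟨α + β, by omega, ?_⟩
  intro N hN
  set u : ℕ → G := fun j => if j < α then c else if j < α + β then a else d with hu
  set t : Fin N → G := fun i => u (i : ℕ) with ht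
  have htD : ∀ i, t i ∈ D := by
    intro i
    rw [ht, hu]
    dsimp only
    split_ifs <;> assumption
  have hsplit1 : (Finset.range N).filter (fun j => j < α) = Finset.range α := by
    ext j; simp only [Finset.mem_filter, Finset.mem_range]; omega
  have hsplit2 : (Finset.range N).filter (fun j => ¬ j < α) = Finset.Ico α N := by
    ext j; simp only [Finset.mem_filter, Finset.mem_range, Finset.mem_Ico]; omega
  have hsplit3 : (Finset.Ico α N).filter (fun j => j < α + β) = Finset.Ico α (α + β) := by
    ext j; simp only [Finset.mem_filter, Finset.mem_Ico]; omega
  have hsplit4 : (Finset.Ico α N).filter (fun j => ¬ j < α + β) = Finset.Ico (α + β) N := by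
    ext j; simp only [Finset.mem_filter, Finset.mem_Ico]; omega
  have htp : ∏ i, t i = d ^ N := by
    have h1 : ∏ i : Fin N, t i = ∏ j ∈ Finset.range N, u j :=
      Fin.prod_univ_eq_prod_range u N
    rw [h1, hu]
    rw [Finset.prod_ite _ _, hsplit1, Finset.prod_const, Finset.card_range,
      hsplit2, Finset.prod_ite _ _, hsplit3, hsplit4, Finset.prod_const, Finset.prod_const,
      Nat.card_Ico, Nat.card_Ico]
    have hba : α + β - α = β := by omega
    rw [hba, ← mul_assoc, hgrp, ← pow_add]
    congr 1
    omega
  have hcd' : c ≠ d := fun h => absurd (congrArg f h) (by linarith)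
  have hne : t ≠ (fun _ => d) := by
    intro hcon
    have h0 : (0:ℕ) < N := by omega
    have h2 := congrFun hcon ⟨0, h0⟩
    rw [ht, hu] at h2
    dsimp only at h2
    rw [if_pos (by omega : (0:ℕ) < α)] at h2
    exact hcd' h2
  unfold cntPow
  refine Finset.one_lt_card.mpr ⟨fun _ => d, ?_, t, ?_, ?_⟩
  · rw [Finset.mem_filter, Fintype.mem_piFinset]
    refine ⟨fun _ => hd, ?_⟩
    rw [Finset.prod_const, Finset.card_univ, Fintype.card_fin]
  · rw [Finset.mem_filter, Fintype.mem_piFinset]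
    exact ⟨htD, htp⟩
  · intro hcon
    exact hne hcon.symm

end Middle

end SchurRing

namespace SchurRing

open Finset

variable {F G : Type*} [Field F] [CharZero F] [CommGroup G] [DecidableEq G]

section NoTriple

variable (S : SchurRing F G)

lemma no_triple_aux (hTF : Monoid.IsTorsionFree G)
    (hLC : ∀ H : Subgroup G, H.FG → IsCyclic H)
    {f : G → ℚ} (hf : ∀ a b : G, f (a * b) = f a + f b) (hfi : Function.Injective f)
    {g : G} (hcard : 3 ≤ (S.cls g).card)
    {a : G} (ha : a ∈ S.cls g) (hamax : ∀ x ∈ S.cls g, f x ≤ f a) (hapos : 0 < f a) :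
    False := by
  have hDcls : S.cls g ∈ S.classes := S.cls_mem g
  obtain ⟨c, hc, hcmin⟩ := Finset.exists_min_image (S.cls g) f ⟨a, ha⟩
  have hex : ∃ e ∈ S.cls g, e ≠ a ∧ e ≠ c := by
    by_contra hcon
    push_neg at hcon
    have hsub : S.cls g ⊆ {a, c} := by
      intro x hx
      rw [Finset.mem_insert, Finset.mem_singleton]
      by_cases hxa : x = a
      · left; exact hxa
      · right; exact hcon x hx hxa
    have h1 := Finset.card_le_card hsub
    have h2 : ({a, c} : Finset G).card ≤ 2 := (Finset.card_insert_le _ _).trans (by simp)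
    omega
  obtain ⟨e, he, hea, hec⟩ := hex
  have hfe_lt : f e < f a := lt_of_le_of_ne (hamax e he) (fun h => hea (hfi h))
  have hfc_lt : f c < f e := lt_of_le_of_ne (hcmin e he) (fun h => hec (hfi h.symm))
  -- uniform threshold over middle elements
  have hthr : ∀ d : G, ∃ m : ℕ, 1 ≤ m ∧ (d ∈ S.cls g → f c < f d → f d < f a →
      ∀ N, m ≤ N → 2 ≤ cntPow (S.cls g) N (d ^ N)) := by
    intro d
    by_cases h1 : d ∈ S.cls g ∧ f c < f d ∧ f d < f a
    · obtain ⟨m, hm1, hm2⟩ := cntPow_middle_ge_two hf hfi ha hc h1.1 h1.2.1 h1.2.2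
      exact ⟨m, hm1, fun _ _ _ => hm2⟩
    · exact ⟨1, le_refl 1, fun hd hlt hgt => absurd ⟨hd, hlt, hgt⟩ h1⟩
  choose md hmd1 hmd2 using hthr
  set N₀ := max 1 ((S.cls g).sup md) with hN₀def
  have hN₀1 : 1 ≤ N₀ := le_max_left _ _
  -- classes of a^N only contain a^N and c^N
  have hsubN : ∀ N, N₀ ≤ N → ∀ y ∈ S.cls (a ^ N), y = a ^ N ∨ y = c ^ N := by
    intro N hN y hy
    have hN1 : 1 ≤ N := le_trans hN₀1 hN
    have h1 : cntPow (S.cls g) N (a ^ N) = 1 := cntPow_max_eq_one hf hfi ha hamax N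
    have h2 : cntPow (S.cls g) N y = 1 := by
      rw [S.cntPow_const hDcls hN1 (S.cls_mem (a ^ N)) hy (S.mem_cls (a ^ N))]
      exact h1
    obtain ⟨d, hd, rfl⟩ := cntPow_eq_one_constant hf hfi hN1 h2
    by_cases hda : d = a
    · left; rw [hda]
    by_cases hdc : d = c
    · right; rw [hdc]
    exfalso
    have hlt1 : f c < f d := lt_of_le_of_ne (hcmin d hd) (fun h => hdc (hfi h.symm))
    have hlt2 : f d < f a := lt_of_le_of_ne (hamax d hd) (fun h => hda (hfi h))
    have hNm : md d ≤ N := le_trans (le_trans (Finset.le_sup hd) (le_max_right _ _)) hN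
    have h3 := hmd2 d hd hlt1 hlt2 N hNm
    rw [h2] at h3
    omega
  have hfane : f a ≠ f c := by intro h; linarith
  have hfa_ne : ∀ N : ℕ, 1 ≤ N → a ^ N ≠ c ^ N := by
    intro N hN hcon
    have h1 := congrArg f hcon
    rw [f_pow hf, f_pow hf] at h1
    have hNq : (N : ℚ) ≠ 0 := by
      have : N ≠ 0 := by omega
      exact_mod_cast this
    exact hfane (mul_left_cancel₀ hNq h1)
  -- classes of a^N are the full pair {a^N, c^N}
  have hpair : ∀ N, N₀ ≤ N → S.cls (a ^ N) = {a ^ N, c ^ N} := by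
    intro N hN
    by_cases hcN : c ^ N ∈ S.cls (a ^ N)
    · apply Finset.Subset.antisymm
      · intro y hy
        rcases hsubN N hN y hy with rfl | rfl
        · exact Finset.mem_insert_self _ _
        · exact Finset.mem_insert_of_mem (Finset.mem_singleton_self _)
      · intro y hy
        rw [Finset.mem_insert, Finset.mem_singleton] at hy
        rcases hy with rfl | rfl
        · exact S.mem_cls _
        · exact hcN
    · exfalso
      have hsing : S.cls (a ^ N) = {a ^ N} := by
        ext y
        rw [Finset.mem_singleton]
        constructor
        · intro hy
          rcases hsubN N hN y hy with h | h
          · exact h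
          · rw [h] at hy; exact absurd hy hcN
        · rintro rfl; exact S.mem_cls _
      have hσ : ({a ^ N} : Finset G) ∈ S.classes := by rw [← hsing]; exact S.cls_mem _
      have htr := S.cls_mul_singleton hσ a
      have he1 : a * a ^ N = a ^ (N + 1) := by rw [pow_succ, mul_comm]
      rw [he1] at htr
      have hclsa : S.cls a = S.cls g := S.cls_eq_cls_of_mem ha
      have hcard2 : 3 ≤ (S.cls (a ^ (N + 1))).card := by
        rw [htr, hclsa, Finset.card_image_of_injective _ (mul_left_injective (a ^ N))]
        exact hcard
      have hsub3 := hsubN (N + 1) (by omega)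
      have hcard3 : (S.cls (a ^ (N + 1))).card ≤ 2 := by
        have hss : S.cls (a ^ (N + 1)) ⊆ {a ^ (N + 1), c ^ (N + 1)} := by
          intro y hy
          rcases hsub3 y hy with rfl | rfl
          · exact Finset.mem_insert_self _ _
          · exact Finset.mem_insert_of_mem (Finset.mem_singleton_self _)
        exact le_trans (Finset.card_le_card hss) ((Finset.card_insert_le _ _).trans (by simp))
      omega
  -- R2 gives symmetry
  have hsymm : ∀ N, N₀ ≤ N → c ^ N = (a ^ N)⁻¹ := by
    intro N hN
    exact S.pair_symmetric hTF hLC hf hfi (hpair N hN) (hfa_ne N (le_trans hN₀1 hN))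
  have hN₀q : (N₀ : ℚ) ≠ 0 := by
    have : N₀ ≠ 0 := by omega
    exact_mod_cast this
  have hfc : f c = - f a := by
    have h1 := congrArg f (hsymm N₀ (le_refl _))
    rw [f_pow hf, f_inv hf, f_pow hf] at h1
    have h2 : (N₀ : ℚ) * f c = (N₀ : ℚ) * (- f a) := by linarith
    exact mul_left_cancel₀ hN₀q h2
  -- the two pair classes P and Q
  have hP : S.cls (a ^ N₀) = {a ^ N₀, (a ^ N₀)⁻¹} := by
    rw [hpair N₀ (le_refl _), hsymm N₀ (le_refl _)]
  have hQ : S.cls (a ^ (N₀ + 1)) = {a ^ (N₀ + 1), (a ^ (N₀ + 1))⁻¹} := by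
    rw [hpair (N₀ + 1) (by omega), hsymm (N₀ + 1) (by omega)]
  have hPmem : ({a ^ N₀, (a ^ N₀)⁻¹} : Finset G) ∈ S.classes := by
    rw [← hP]; exact S.cls_mem _
  have hQmem : ({a ^ (N₀ + 1), (a ^ (N₀ + 1))⁻¹} : Finset G) ∈ S.classes := by
    rw [← hQ]; exact S.cls_mem _
  have hN₀Q1 : (1:ℚ) ≤ (N₀ : ℚ) := by exact_mod_cast hN₀1
  have hne1 : a ^ N₀ ≠ (a ^ N₀)⁻¹ := by
    intro hcon
    have h1 := congrArg f hcon
    rw [f_inv hf, f_pow hf] at h1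
    nlinarith
  -- cnt P Q a = 1
  have hcnt_a : cnt ({a ^ N₀, (a ^ N₀)⁻¹}) ({a ^ (N₀ + 1), (a ^ (N₀ + 1))⁻¹}) a = 1 := by
    rw [cnt_pair hne1]
    have m1 : (a ^ N₀)⁻¹ * a ∉ ({a ^ (N₀ + 1), (a ^ (N₀ + 1))⁻¹} : Finset G) := by
      intro hm
      rw [Finset.mem_insert, Finset.mem_singleton] at hm
      rcases hm with hm | hm
      · have h1 := congrArg f hm
        rw [hf, f_inv hf, f_pow hf, f_pow hf] at h1
        push_cast at h1
        nlinarith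
      · have h1 := congrArg f hm
        rw [hf, f_inv hf, f_pow hf, f_inv hf, f_pow hf] at h1
        push_cast at h1
        nlinarith
    have m2 : ((a ^ N₀)⁻¹)⁻¹ * a ∈ ({a ^ (N₀ + 1), (a ^ (N₀ + 1))⁻¹} : Finset G) := by
      rw [inv_inv]
      have h1 : a ^ N₀ * a = a ^ (N₀ + 1) := by rw [pow_succ]
      rw [h1]
      exact Finset.mem_insert_self _ _
    rw [if_neg m1, if_pos m2]
  -- constancy forces cnt at e to be 1
  have hcnt_e : cnt ({a ^ N₀, (a ^ N₀)⁻¹}) ({a ^ (N₀ + 1), (a ^ (N₀ + 1))⁻¹}) e = 1 := by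
    rw [S.cnt_const hPmem hQmem hDcls he ha]
    exact hcnt_a
  have hcnt_ne : cnt ({a ^ N₀, (a ^ N₀)⁻¹}) ({a ^ (N₀ + 1), (a ^ (N₀ + 1))⁻¹}) e ≠ 0 := by
    rw [hcnt_e]; omega
  obtain ⟨u, hu, v, hv, huv⟩ := cnt_ne_zero hcnt_ne
  have hfuv : f u + f v = f e := by rw [← hf, huv]
  rw [Finset.mem_insert, Finset.mem_singleton] at hu hv
  have hfu : f u = (N₀ : ℚ) * f a ∨ f u = -((N₀ : ℚ) * f a) := by
    rcases hu with rfl | rfl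
    · left; exact f_pow hf a N₀
    · right; rw [f_inv hf, f_pow hf]
  have hfv : f v = ((N₀ : ℚ) + 1) * f a ∨ f v = -(((N₀ : ℚ) + 1) * f a) := by
    rcases hv with rfl | rfl
    · left; rw [f_pow hf]; push_cast; ring
    · right; rw [f_inv hf, f_pow hf]; push_cast; ring
  rcases hfu with h1 | h1 <;> rcases hfv with h2 | h2
  · nlinarith
  · -- f e = -f a = f c hence e = c
    have h3 : f e = f c := by rw [hfc]; linarith
    exact hec (hfi h3)
  · have h3 : f e = f a := by linarith
    exact hea (hfi h3)
  · nlinarith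

end NoTriple

end SchurRing

namespace SchurRing

open Finset

variable {F G : Type*} [Field F] [CharZero F] [CommGroup G] [DecidableEq G]

section Final

variable (S : SchurRing F G)

lemma card_le_two (hTF : Monoid.IsTorsionFree G)
    (hLC : ∀ H : Subgroup G, H.FG → IsCyclic H)
    {f : G → ℚ} (hf : ∀ a b : G, f (a * b) = f a + f b) (hfi : Function.Injective f)
    (g : G) : (S.cls g).card ≤ 2 := by
  by_contra hcon
  push_neg at hcon
  have hcard : 3 ≤ (S.cls g).card := hcon
  obtain ⟨a, ha, hamax⟩ := Finset.exists_max_image (S.cls g) f ⟨g, S.mem_cls g⟩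
  by_cases hpos : 0 < f a
  · exact S.no_triple_aux hTF hLC hf hfi hcard ha hamax hpos
  · have hinv := S.cls_inv g
    have hcard' : 3 ≤ (S.cls g⁻¹).card := by
      rw [hinv, Finset.card_image_of_injective _ inv_injective]
      exact hcard
    obtain ⟨c, hc, hcmin⟩ := Finset.exists_min_image (S.cls g) f ⟨a, ha⟩
    have hc' : c⁻¹ ∈ S.cls g⁻¹ := by
      rw [hinv]; exact Finset.mem_image_of_mem _ hc
    have hmax' : ∀ x ∈ S.cls g⁻¹, f x ≤ f c⁻¹ := by
      intro x hx
      rw [hinv] at hx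
      obtain ⟨y, hy, rfl⟩ := Finset.mem_image.mp hx
      rw [f_inv hf, f_inv hf]
      exact neg_le_neg (hcmin y hy)
    have hpos' : 0 < f c⁻¹ := by
      rw [f_inv hf]
      obtain ⟨x, hx, hxa⟩ := Finset.exists_mem_ne (s := S.cls g) (by omega) a
      have h1 : f x < f a := lt_of_le_of_ne (hamax x hx) (fun h => hxa (hfi h))
      have h2 : f c ≤ f x := hcmin x hx
      push_neg at hpos
      linarith
    exact S.no_triple_aux hTF hLC hf hfi hcard' hc' hmax' hpos'

/-- Classification: every class is a singleton or a symmetric pair. -/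
lemma cls_classify (hTF : Monoid.IsTorsionFree G)
    (hLC : ∀ H : Subgroup G, H.FG → IsCyclic H)
    {f : G → ℚ} (hf : ∀ a b : G, f (a * b) = f a + f b) (hfi : Function.Injective f)
    (g : G) : S.cls g = {g} ∨ S.cls g = {g, g⁻¹} := by
  have hle := S.card_le_two hTF hLC hf hfi g
  have hpos : 0 < (S.cls g).card := Finset.card_pos.mpr ⟨g, S.mem_cls g⟩
  by_cases h1 : (S.cls g).card = 1
  · left
    obtain ⟨x, hx⟩ := Finset.card_eq_one.mp h1
    have hg : g ∈ S.cls g := S.mem_cls g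
    rw [hx, Finset.mem_singleton] at hg
    rw [hx, ← hg]
  · have h2 : (S.cls g).card = 2 := by omega
    obtain ⟨x, y, hxy, hx⟩ := Finset.card_eq_two.mp h2
    have hg : g ∈ ({x, y} : Finset G) := by rw [← hx]; exact S.mem_cls g
    rw [Finset.mem_insert, Finset.mem_singleton] at hg
    right
    rcases hg with rfl | rfl
    · have hy := S.pair_symmetric hTF hLC hf hfi hx hxy
      rw [hx, hy]
    · have hx' : S.cls g = {g, x} := by rw [hx, Finset.pair_comm]
      have hy := S.pair_symmetric hTF hLC hf hfi hx' (fun h => hxy h.symm)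
      rw [hx', hy]

/-- The main theorem, in class form. -/
lemma main_dichotomy (hTF : Monoid.IsTorsionFree G)
    (hLC : ∀ H : Subgroup G, H.FG → IsCyclic H) :
    (∀ g : G, S.cls g = {g}) ∨ (∀ g : G, S.cls g = {g, g⁻¹}) := by
  obtain ⟨f, hf, hfi⟩ := exists_embedding hTF hLC
  have hclass := S.cls_classify hTF hLC hf hfi
  by_cases hL : ∀ g : G, S.cls g = {g}
  · exact Or.inl hL
  · right
    push_neg at hL
    obtain ⟨s, hs⟩ := hL
    have hsp : S.cls s = {s, s⁻¹} := (hclass s).resolve_left hs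
    have hss : s ≠ s⁻¹ := by
      intro hcon
      apply hs
      rw [hsp, ← hcon]
      simp
    intro g
    rcases hclass g with h | h
    · by_cases hg1 : g = 1
      · rw [hg1, S.cls_one]
        simp
      · exfalso
        have hσ : ({g} : Finset G) ∈ S.classes := by rw [← h]; exact S.cls_mem g
        have htr := S.cls_mul_singleton hσ s
        have himg : (S.cls s).image (· * g) = {s * g, s⁻¹ * g} := by
          rw [hsp, Finset.image_insert, Finset.image_singleton]
        rw [himg] at htr
        rcases hclass (s * g) with h2 | h2
        · rw [h2] at htr
          have hmem : s⁻¹ * g ∈ ({s * g} : Finset G) := by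
            rw [htr]; exact Finset.mem_insert_of_mem (Finset.mem_singleton_self _)
          rw [Finset.mem_singleton] at hmem
          exact hss (mul_right_cancel hmem).symm
        · rw [h2] at htr
          have hmem : (s * g)⁻¹ ∈ ({s * g, s⁻¹ * g} : Finset G) := by
            rw [← htr]
            exact Finset.mem_insert_of_mem (Finset.mem_singleton_self _)
          rw [Finset.mem_insert, Finset.mem_singleton] at hmem
          rcases hmem with hm | hm
          · have h4 : (s * g) ^ 2 = 1 := by
              rw [pow_two]
              nth_rewrite 2 [← hm]
              rw [mul_inv_cancel]
            have h5 : s * g = 1 := tf_pow_eq_one hTF two_ne_zero h4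
            have h6 : s⁻¹ = g := by
              rw [← mul_eq_one_iff_inv_eq]
              exact h5
            have h7 : g ∈ S.cls s := by
              rw [hsp, ← h6]
              exact Finset.mem_insert_of_mem (Finset.mem_singleton_self _)
            have h8 : S.cls g = S.cls s := S.cls_eq_cls_of_mem h7
            rw [h, hsp] at h8
            have h9 : s ∈ ({g} : Finset G) := by
              rw [h8]; exact Finset.mem_insert_self _ _
            rw [Finset.mem_singleton] at h9
            rw [← h9] at h6
            exact hss h6.symm
          · have h3 : s⁻¹ * g⁻¹ = s⁻¹ * g := by
              rw [← hm, mul_inv_rev, mul_comm]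
            have h4 : g⁻¹ = g := mul_left_cancel h3
            have h5 : g * g = 1 := by
              have h6 := mul_inv_cancel g
              rw [h4] at h6
              exact h6
            exact hg1 (tf_pow_eq_one hTF two_ne_zero (by rw [pow_two]; exact h5))
    · exact h

end Final

end SchurRing


theorem stmt15 {F G : Type*} [Field F] [CharZero F] [CommGroup G] [DecidableEq G]
    (hTF : Monoid.IsTorsionFree G)
    (hLC : ∀ H : Subgroup G, H.FG → IsCyclic H)
    (S : SchurRing F G) :
    S.classes = Set.range (fun g : G => ({g} : Finset G)) ∨
    S.classes = Set.range (fun g : G => ({g, g⁻¹} : Finset G)) := by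
  rcases S.main_dichotomy hTF hLC with h | h
  · left
    ext C
    simp only [Set.mem_range]
    constructor
    · intro hC
      obtain ⟨x, hx⟩ := S.nonempty C hC
      exact ⟨x, ((S.cls_eq_of_mem hC hx).trans (h x)).symm⟩
    · rintro ⟨x, hx⟩
      rw [← hx, ← h x]
      exact S.cls_mem x
  · right
    ext C
    simp only [Set.mem_range]
    constructor
    · intro hC
      obtain ⟨x, hx⟩ := S.nonempty C hC
      exact ⟨x, ((S.cls_eq_of_mem hC hx).trans (h x)).symm⟩
    · rintro ⟨x, hx⟩
      rw [← hx, ← h x]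
      exact S.cls_mem x
end

section
/- There exist two Schur modules S and T over the infinite cyclic group Z whose intersection S ∩ T = 0; in particular, the intersection of two Schur modules over an infinite group need not be a Schur module. Specifically, for S with partition {{z^{2k}, z^{2k+1}} | k ∈ ℤ} and T with partition {{z^{2k}, z^{2k-1}} | k ∈ ℤ}, one has S ∩ T = 0. -/
section Aux

open Multiplicative

lemma aux_ofAdd_inj {m n : ℤ} (h : (ofAdd m : Multiplicative ℤ) = ofAdd n) : m = n := by
  simpa using h

lemma aux_ofAdd_ne {m n : ℤ} (h : m ≠ n) : (ofAdd m : Multiplicative ℤ) ≠ ofAdd n :=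
  fun he => h (aux_ofAdd_inj he)

/-- A partition of `Multiplicative ℤ` into pairs `{ofAdd (a k), ofAdd (b k)}`. -/
noncomputable def pairPartition (a b : ℤ → ℤ)
    (huniq : ∀ n : ℤ, ∃! k : ℤ, n = a k ∨ n = b k) : FinPartition (Multiplicative ℤ) where
  classes := Set.range (fun k : ℤ =>
    ({ofAdd (a k), ofAdd (b k)} : Finset (Multiplicative ℤ)))
  nonempty := by
    rintro C ⟨k, rfl⟩
    exact ⟨_, Finset.mem_insert_self _ _⟩
  existsUnique_mem := by
    intro g
    obtain ⟨k, hk, hk'⟩ := huniq g.toAdd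
    refine ⟨{ofAdd (a k), ofAdd (b k)}, ⟨⟨k, rfl⟩, ?_⟩, ?_⟩
    · rcases hk with h | h
      · have : g = ofAdd (a k) := by rw [← h, ofAdd_toAdd]
        simp [this]
      · have : g = ofAdd (b k) := by rw [← h, ofAdd_toAdd]
        simp [this]
    · rintro C ⟨⟨j, rfl⟩, hg⟩
      simp only [Finset.mem_insert, Finset.mem_singleton] at hg
      have hj : g.toAdd = a j ∨ g.toAdd = b j := by
        rcases hg with h | h <;> [left; right] <;> rw [h, toAdd_ofAdd]
      rw [hk' j hj]

lemma simpleQuantity_pair (F : Type*) [Field F] {m n : ℤ} (h : m ≠ n) :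
    simpleQuantity F ({ofAdd m, ofAdd n} : Finset (Multiplicative ℤ)) =
      MonoidAlgebra.single (ofAdd m) 1 + MonoidAlgebra.single (ofAdd n) 1 := by
  rw [simpleQuantity, Finset.sum_insert (by simp [aux_ofAdd_ne h]), Finset.sum_singleton]

lemma schurModule_pairPartition (F : Type*) [Field F] (a b : ℤ → ℤ)
    (hab : ∀ k, a k ≠ b k) (huniq : ∀ n : ℤ, ∃! k : ℤ, n = a k ∨ n = b k) :
    schurModule F (pairPartition a b huniq) = Submodule.span F (Set.range fun k : ℤ =>
      (MonoidAlgebra.single (ofAdd (a k)) 1 + MonoidAlgebra.single (ofAdd (b k)) 1 :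
        MonoidAlgebra F (Multiplicative ℤ))) := by
  rw [schurModule, pairPartition, ← Set.range_comp]
  exact congrArg (Submodule.span F)
    (congrArg Set.range (funext fun k => simpleQuantity_pair F (hab k)))

lemma aux_pair_apply (F : Type*) [Field F] (m n r : ℤ) :
    ((MonoidAlgebra.single (ofAdd m) (1:F) + MonoidAlgebra.single (ofAdd n) 1) :
      MonoidAlgebra F (Multiplicative ℤ)).coeff (ofAdd r)
      = (if m = r then (1:F) else 0) + (if n = r then 1 else 0) := by
  rw [MonoidAlgebra.coeff_add, MonoidAlgebra.coeff_single, MonoidAlgebra.coeff_single]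
  simp [Finsupp.single_apply]

lemma aux_apply_add {F : Type*} [Field F] (x y : MonoidAlgebra F (Multiplicative ℤ))
    (g : Multiplicative ℤ) : (x + y).coeff g = x.coeff g + y.coeff g := rfl

lemma aux_apply_smul {F : Type*} [Field F] (c : F) (x : MonoidAlgebra F (Multiplicative ℤ))
    (g : Multiplicative ℤ) : (c • x).coeff g = c * x.coeff g := rfl

/-- Elements of the span of the pair generators take equal values at the two points
of each pair. -/
lemma aux_span_eq_apply {F : Type*} [Field F] (a b : ℤ → ℤ)
    (h1 : ∀ j k, a j = a k ↔ b j = b k) (h2 : ∀ j k, b j = a k ↔ a j = b k)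
    (x : MonoidAlgebra F (Multiplicative ℤ))
    (hx : x ∈ Submodule.span F (Set.range fun k : ℤ =>
      (MonoidAlgebra.single (ofAdd (a k)) 1 + MonoidAlgebra.single (ofAdd (b k)) 1 :
        MonoidAlgebra F (Multiplicative ℤ)))) :
    ∀ k : ℤ, x.coeff (ofAdd (a k)) = x.coeff (ofAdd (b k)) := by
  induction hx using Submodule.span_induction with
  | mem y hy =>
      obtain ⟨j, rfl⟩ := hy
      intro k
      rw [aux_pair_apply, aux_pair_apply, if_congr (h1 j k) rfl rfl,
        if_congr (h2 j k) rfl rfl, add_comm]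
  | zero => intro k; rfl
  | add y z hy hz hy' hz' => intro k; rw [aux_apply_add, aux_apply_add, hy' k, hz' k]
  | smul c y hy hy' => intro k; rw [aux_apply_smul, aux_apply_smul, hy' k]

end Aux

theorem stmt19 {F : Type*} [Field F] [CharZero F]
    (z : Multiplicative ℤ) (hz : z = Multiplicative.ofAdd 1)
    (S T : Submodule F (MonoidAlgebra F (Multiplicative ℤ)))
    (hS : S = Submodule.span F (Set.range fun k : ℤ =>
      (MonoidAlgebra.single (z ^ (2 * k)) 1 + MonoidAlgebra.single (z ^ (2 * k + 1)) 1 :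
        MonoidAlgebra F (Multiplicative ℤ))))
    (hT : T = Submodule.span F (Set.range fun k : ℤ =>
      (MonoidAlgebra.single (z ^ (2 * k)) 1 + MonoidAlgebra.single (z ^ (2 * k - 1)) 1 :
        MonoidAlgebra F (Multiplicative ℤ)))) :
    -- `S` and `T` are Schur modules
    (∃ P : FinPartition (Multiplicative ℤ), S = schurModule F P) ∧
    (∃ Q : FinPartition (Multiplicative ℤ), T = schurModule F Q) ∧
    -- whose intersection is zero, hence not a Schur module
    S ⊓ T = ⊥ ∧
    ¬ ∃ R : FinPartition (Multiplicative ℤ), S ⊓ T = schurModule F R := by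
  have hzp : ∀ n : ℤ, z ^ n = Multiplicative.ofAdd n := by
    intro n; rw [hz, ← ofAdd_zsmul]; simp
  simp only [hzp] at hS hT
  have huniqS : ∀ n : ℤ, ∃! k : ℤ, n = 2 * k ∨ n = 2 * k + 1 := by
    intro n
    obtain ⟨k, hk⟩ : ∃ k : ℤ, n = 2 * k ∨ n = 2 * k + 1 := ⟨n / 2, by omega⟩
    exact ⟨k, hk, fun j hj => by omega⟩
  have huniqT : ∀ n : ℤ, ∃! k : ℤ, n = 2 * k ∨ n = 2 * k - 1 := by
    intro n
    obtain ⟨k, hk⟩ : ∃ k : ℤ, n = 2 * k ∨ n = 2 * k - 1 := ⟨(n + 1) / 2, by omega⟩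
    exact ⟨k, hk, fun j hj => by omega⟩
  have hSP : S = schurModule F (pairPartition (fun k => 2 * k) (fun k => 2 * k + 1) huniqS) := by
    rw [schurModule_pairPartition F _ _ (fun k => by omega) huniqS, hS]
  have hTQ : T = schurModule F (pairPartition (fun k => 2 * k) (fun k => 2 * k - 1) huniqT) := by
    rw [schurModule_pairPartition F _ _ (fun k => by omega) huniqT, hT]
  have hbot : S ⊓ T = ⊥ := by
    rw [eq_bot_iff]
    rintro x hx
    rw [Submodule.mem_inf] at hx
    obtain ⟨hxS, hxT⟩ := hx
    rw [hS] at hxS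
    rw [hT] at hxT
    have hSstep := aux_span_eq_apply (fun k => 2 * k) (fun k => 2 * k + 1)
      (fun j k => by omega) (fun j k => by omega) x hxS
    have hTstep := aux_span_eq_apply (fun k => 2 * k) (fun k => 2 * k - 1)
      (fun j k => by omega) (fun j k => by omega) x hxT
    have hconst : ∀ n : ℤ, x.coeff (Multiplicative.ofAdd n) = x.coeff (Multiplicative.ofAdd (n + 1)) := by
      intro n
      rcases Int.even_or_odd n with ⟨k, hk⟩ | ⟨k, hk⟩
      · obtain rfl : n = 2 * k := by omega
        exact hSstep k
      · obtain rfl : n = 2 * k + 1 := by omega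
        have := hTstep (k + 1)
        beta_reduce at this
        rw [show 2 * (k + 1) = 2 * k + 1 + 1 by ring,
          show 2 * k + 1 + 1 - 1 = 2 * k + 1 by ring] at this
        exact this.symm
    have hall : ∀ n : ℤ, x.coeff (Multiplicative.ofAdd n) = x.coeff (Multiplicative.ofAdd 0) := by
      intro n
      induction n using Int.induction_on with
      | zero => rfl
      | succ k ih => rw [← hconst (k : ℤ)]; exact ih
      | pred k ih =>
          rw [hconst (-(k : ℤ) - 1), show (-(k : ℤ) - 1 + 1) = -(k : ℤ) by ring]
          exact ih
    have h0 : x.coeff (Multiplicative.ofAdd 0) = 0 := by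
      by_contra h0
      have hsub : Set.range (Multiplicative.ofAdd : ℤ → Multiplicative ℤ) ⊆ ↑x.coeff.support := by
        rintro g ⟨n, rfl⟩
        rw [Finset.mem_coe, Finsupp.mem_support_iff]
        rw [show (x.coeff (Multiplicative.ofAdd n) : F) = x.coeff (Multiplicative.ofAdd 0) from hall n]
        exact h0
      have hinf : (↑x.coeff.support : Set (Multiplicative ℤ)).Infinite :=
        (Set.infinite_range_of_injective (fun m n h => aux_ofAdd_inj h)).mono hsub
      exact hinf x.coeff.support.finite_toSet
    have : x = 0 := by
      ext g
      rw [← ofAdd_toAdd g, hall g.toAdd, h0]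
      rfl
    rw [Submodule.mem_bot]
    exact this
  refine ⟨⟨_, hSP⟩, ⟨_, hTQ⟩, hbot, ?_⟩
  rintro ⟨R, hR⟩
  obtain ⟨C, ⟨hC, -⟩, -⟩ := R.existsUnique_mem 1
  obtain ⟨g, hg⟩ := R.nonempty C hC
  have hmem : simpleQuantity F C ∈ schurModule F R :=
    Submodule.subset_span ⟨C, hC, rfl⟩
  rw [← hR, hbot, Submodule.mem_bot] at hmem
  have h1 : (simpleQuantity F C).coeff g = 1 := by
    show ((∑ a ∈ C, MonoidAlgebra.single a 1 : MonoidAlgebra F (Multiplicative ℤ))).coeff g = 1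
    simp [MonoidAlgebra.coeff_sum, MonoidAlgebra.coeff_single, Finsupp.finset_sum_apply, Finsupp.single_apply, hg]
  rw [hmem] at h1
  exact one_ne_zero h1.symm
end
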